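/- arXiv:2308.09252 — 12 statements merged into one kernel-verified Lean document; each statement's English description precedes it below -/
import Mathlib

section
/- For bounded linear operators B and C on a complex Hilbert space H and any real θ, the Euclidean operator radius satisfies w_e(B,C) ≥ (1/√2) · w(B + e^{iθ} C). -/
open ContinuousLinearMap

noncomputable def nr {E : Type*} [NormedAddCommGroup E] [InnerProductSpace ℂ E]
    (T : E →L[ℂ] E) : ℝ :=
  sSup {r : ℝ | ∃ x : E, ‖x‖ = 1 ∧ r = ‖(inner ℂ (T x) x : ℂ)‖}

noncomputable def er {E : Type*} [NormedAddCommGroup E] [InnerProductSpace ℂ E]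
    (B C : E →L[ℂ] E) : ℝ :=
  sSup {r : ℝ | ∃ x : E, ‖x‖ = 1 ∧
    r = Real.sqrt (‖(inner ℂ (B x) x : ℂ)‖ ^ 2 + ‖(inner ℂ (C x) x : ℂ)‖ ^ 2)}

theorem stmt_1 {H : Type*} [NormedAddCommGroup H] [InnerProductSpace ℂ H] [CompleteSpace H]
    (B C : H →L[ℂ] H) (θ : ℝ) :
    er B C ≥ (1 / Real.sqrt 2) * nr (B + Complex.exp (θ * Complex.I) • C) := by
  have h2 : (0:ℝ) < Real.sqrt 2 := Real.sqrt_pos.mpr (by norm_num)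
  -- er is nonneg
  have her0 : 0 ≤ er B C := by
    apply Real.sSup_nonneg
    rintro r ⟨x, hx, rfl⟩
    exact Real.sqrt_nonneg _
  -- er set bounded above
  have hbdd : BddAbove {r : ℝ | ∃ x : H, ‖x‖ = 1 ∧
      r = Real.sqrt (‖(inner ℂ (B x) x : ℂ)‖ ^ 2 + ‖(inner ℂ (C x) x : ℂ)‖ ^ 2)} := by
    refine ⟨‖B‖ + ‖C‖, ?_⟩
    rintro r ⟨x, hx, rfl⟩
    have hb : ‖(inner ℂ (B x) x : ℂ)‖ ≤ ‖B‖ := by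
      calc ‖(inner ℂ (B x) x : ℂ)‖ = ‖(inner ℂ (B x) x : ℂ)‖ := rfl
        _ ≤ ‖B x‖ * ‖x‖ := norm_inner_le_norm _ _
        _ ≤ ‖B‖ * ‖x‖ * ‖x‖ := by
            have := B.le_opNorm x
            nlinarith [norm_nonneg x]
        _ = ‖B‖ := by rw [hx]; ring
    have hc : ‖(inner ℂ (C x) x : ℂ)‖ ≤ ‖C‖ := by
      calc ‖(inner ℂ (C x) x : ℂ)‖ = ‖(inner ℂ (C x) x : ℂ)‖ := rfl
        _ ≤ ‖C x‖ * ‖x‖ := norm_inner_le_norm _ _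
        _ ≤ ‖C‖ * ‖x‖ * ‖x‖ := by
            have := C.le_opNorm x
            nlinarith [norm_nonneg x]
        _ = ‖C‖ := by rw [hx]; ring
    have hb0 : 0 ≤ ‖(inner ℂ (B x) x : ℂ)‖ := norm_nonneg _
    have hc0 : 0 ≤ ‖(inner ℂ (C x) x : ℂ)‖ := norm_nonneg _
    have : Real.sqrt (‖(inner ℂ (B x) x : ℂ)‖ ^ 2 + ‖(inner ℂ (C x) x : ℂ)‖ ^ 2)
        ≤ ‖(inner ℂ (B x) x : ℂ)‖ + ‖(inner ℂ (C x) x : ℂ)‖ := by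
      rw [show ‖(inner ℂ (B x) x : ℂ)‖ + ‖(inner ℂ (C x) x : ℂ)‖
        = Real.sqrt ((‖(inner ℂ (B x) x : ℂ)‖ + ‖(inner ℂ (C x) x : ℂ)‖)^2) by
          rw [Real.sqrt_sq (by positivity)]]
      apply Real.sqrt_le_sqrt
      nlinarith
    linarith
  -- main: nr T ≤ √2 * er B C
  have hmain : nr (B + Complex.exp (θ * Complex.I) • C) ≤ Real.sqrt 2 * er B C := by
    apply Real.sSup_le
    · rintro r ⟨x, hx, rfl⟩
      set b := ‖(inner ℂ (B x) x : ℂ)‖ with hbdef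
      set c := ‖(inner ℂ (C x) x : ℂ)‖ with hcdef
      have hb0 : 0 ≤ b := norm_nonneg _
      have hc0 : 0 ≤ c := norm_nonneg _
      have hT : ‖(inner ℂ ((B + Complex.exp (θ * Complex.I) • C) x) x : ℂ)‖ ≤ b + c := by
        have : ((B + Complex.exp (θ * Complex.I) • C) x) = B x + Complex.exp (θ * Complex.I) • C x := by
          simp
        rw [this, inner_add_left, inner_smul_left]
        calc ‖(inner ℂ (B x) x : ℂ) + (starRingEnd ℂ) (Complex.exp (θ * Complex.I)) * (inner ℂ (C x) x : ℂ)‖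
            ≤ ‖(inner ℂ (B x) x : ℂ)‖ + ‖(starRingEnd ℂ) (Complex.exp (θ * Complex.I)) * (inner ℂ (C x) x : ℂ)‖ := by
              apply norm_add_le
          _ = b + c := by
              rw [norm_mul, Complex.norm_conj, Complex.norm_exp_ofReal_mul_I]
              ring
      have hsq : b + c ≤ Real.sqrt 2 * Real.sqrt (b ^ 2 + c ^ 2) := by
        rw [← Real.sqrt_mul (by norm_num)]
        rw [show b + c = Real.sqrt ((b + c)^2) by rw [Real.sqrt_sq (by positivity)]]
        apply Real.sqrt_le_sqrt
        nlinarith [sq_nonneg (b - c)]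
      have hmem : Real.sqrt (b ^ 2 + c ^ 2) ≤ er B C :=
        le_csSup hbdd ⟨x, hx, rfl⟩
      calc ‖(inner ℂ ((B + Complex.exp (θ * Complex.I) • C) x) x : ℂ)‖
          ≤ b + c := hT
        _ ≤ Real.sqrt 2 * Real.sqrt (b ^ 2 + c ^ 2) := hsq
        _ ≤ Real.sqrt 2 * er B C := by nlinarith
    · positivity
  rw [ge_iff_le, div_mul_eq_mul_div, one_mul, div_le_iff₀ h2]
  linarith [hmain, (mul_comm (er B C) (Real.sqrt 2)).le]
end

section
/- For bounded linear operators B and C on a complex Hilbert space H, w_e(B,C)² ≥ (1/2) · w(BC + CB). -/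
open ContinuousLinearMap

lemma rot_fact (z : ℂ) :
    (starRingEnd ℂ) (Complex.exp ((z.arg/2 : ℝ) * Complex.I)) *
    (starRingEnd ℂ) (Complex.exp ((z.arg/2 : ℝ) * Complex.I)) * z = (‖z‖ : ℂ) := by
  rw [← Complex.exp_conj, ← Complex.exp_add]
  have h1 : (starRingEnd ℂ) ((z.arg/2 : ℝ) * Complex.I) = -((z.arg/2 : ℝ) * Complex.I) := by
    simp [Complex.ext_iff, Complex.div_re, Complex.div_im, Complex.normSq]; ring
  rw [h1, ← neg_add]
  have h2 : ((z.arg/2 : ℝ) * Complex.I) + ((z.arg/2 : ℝ) * Complex.I) = (z.arg : ℝ) * Complex.I := by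
    push_cast; ring
  rw [h2]
  nth_rewrite 2 [← Complex.norm_mul_exp_arg_mul_I z]
  rw [Complex.exp_neg]
  field_simp [Complex.exp_ne_zero]

lemma key_ineq {H : Type*} [NormedAddCommGroup H] [InnerProductSpace ℂ H] [CompleteSpace H]
    (T : H →L[ℂ] H) (r : ℝ) (hr : 0 ≤ r)
    (hT : ∀ y : H, ‖(inner ℂ (T y) y : ℂ)‖ ≤ r * ‖y‖ ^ 2)
    (x : H) (hx : ‖x‖ = 1) :
    ‖(inner ℂ ((T * T) x) x : ℂ)‖ ≤ r ^ 2 := by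
  set z : ℂ := inner ℂ ((T * T) x) x with hzdef
  set v : ℂ := Complex.exp ((z.arg/2 : ℝ) * Complex.I) with hvdef
  have hvabs : ‖v‖ = 1 := Complex.norm_exp_ofReal_mul_I _
  have hrot : (starRingEnd ℂ) v * (starRingEnd ℂ) v * z = (‖z‖ : ℂ) := rot_fact z
  set S : H →L[ℂ] H := v • T with hSdef
  have hSapp : ∀ y : H, S y = v • T y := fun y => rfl
  have hS : ∀ y : H, ‖(inner ℂ (S y) y : ℂ)‖ ≤ r * ‖y‖ ^ 2 := by
    intro y
    rw [hSapp, inner_smul_left, norm_mul, Complex.norm_conj, hvabs, one_mul]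
    exact hT y
  set P : H →L[ℂ] H := (2⁻¹ : ℂ) • (S + adjoint S) with hPdef
  set A : H →L[ℂ] H := (r : ℂ) • (1 : H →L[ℂ] H) - P with hAdef
  have hPapp : ∀ y : H, P y = (2⁻¹ : ℂ) • (S y + adjoint S y) := fun y => rfl
  have hAapp : ∀ y : H, A y = (r : ℂ) • y - P y := fun y => rfl
  -- quadratic form of A
  have hAre : ∀ y : H, (inner ℂ (A y) y : ℂ).re = r * ‖y‖ ^ 2 - (inner ℂ (S y) y : ℂ).re := by
    intro y
    rw [hAapp, hPapp, inner_sub_left, inner_smul_left, inner_smul_left, inner_add_left,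
      adjoint_inner_left, inner_self_eq_norm_sq_to_K, ← inner_conj_symm (S y) y]
    simp [Complex.add_re, Complex.mul_re, Complex.conj_re, Complex.conj_im, ← Complex.ofReal_pow]
    have h3 : (inner ℂ y (S y) : ℂ).re = (inner ℂ (S y) y : ℂ).re := by
      rw [← inner_conj_symm (S y) y, Complex.conj_re]
    rw [h3]; ring
  have hQ0 : ∀ y : H, 0 ≤ (inner ℂ (A y) y : ℂ).re := by
    intro y
    have h1 := hS y
    have h2 : (inner ℂ (S y) y : ℂ).re ≤ ‖(inner ℂ (S y) y : ℂ)‖ := Complex.re_le_norm _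
    rw [hAre]; linarith
  have hQ2 : ∀ y : H, (inner ℂ (A y) y : ℂ).re ≤ 2 * (r * ‖y‖ ^ 2) := by
    intro y
    have h1 := hS y
    have h2 : -‖(inner ℂ (S y) y : ℂ)‖ ≤ (inner ℂ (S y) y : ℂ).re := by
      have := Complex.abs_re_le_norm (inner ℂ (S y) y : ℂ)
      cases abs_le.mp this with
      | intro hl hr => exact hl
    rw [hAre]; linarith
  have hAsymm : ∀ u w : H, (inner ℂ (A u) w : ℂ) = inner ℂ u (A w) := by
    intro u w
    rw [hAapp, hAapp, hPapp, hPapp, inner_sub_left, inner_sub_right,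
      inner_smul_left, inner_smul_right, inner_smul_left, inner_smul_right,
      inner_add_left, inner_add_right, adjoint_inner_left, adjoint_inner_right]
    simp [Complex.conj_ofReal, Complex.ext_iff]
    ring_nf
    constructor <;> trivial
  -- discriminant argument: ‖A x‖² ≤ 2r·Q(x)
  have hdisc : ∀ t : ℝ, 0 ≤ (inner ℂ (A (A x)) (A x) : ℂ).re * (t*t)
      + (-(2*‖A x‖^2)) * t + (inner ℂ (A x) x : ℂ).re := by
    intro t
    have h0 := hQ0 (x - (t:ℂ) • A x)
    have e1 : (inner ℂ (A (A x)) x : ℂ) = ((‖A x‖:ℂ))^2 := by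
      rw [hAsymm (A x) x]; exact inner_self_eq_norm_sq_to_K _
    have e2 : (inner ℂ (A x) (A x) : ℂ) = ((‖A x‖:ℂ))^2 := inner_self_eq_norm_sq_to_K _
    have hexp : (inner ℂ (A (x - (t:ℂ) • A x)) (x - (t:ℂ) • A x) : ℂ) =
        inner ℂ (A x) x - (t:ℂ) * inner ℂ (A x) (A x) - (t:ℂ) * inner ℂ (A (A x)) x
          + (t:ℂ)*(t:ℂ) * inner ℂ (A (A x)) (A x) := by
      rw [map_sub, map_smul, inner_sub_left, inner_sub_right, inner_sub_right,
        inner_smul_left, inner_smul_right, inner_smul_left, inner_smul_right]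
      simp [Complex.conj_ofReal]
      ring
    rw [hexp, e1, e2] at h0
    have hre : ((inner ℂ (A x) x : ℂ) - (t:ℂ)*((‖A x‖:ℂ))^2 - (t:ℂ)*((‖A x‖:ℂ))^2
        + (t:ℂ)*(t:ℂ)*(inner ℂ (A (A x)) (A x) : ℂ)).re
        = (inner ℂ (A x) x : ℂ).re - 2*t*‖A x‖^2 + t*t*(inner ℂ (A (A x)) (A x) : ℂ).re := by
      simp [Complex.add_re, Complex.sub_re, Complex.mul_re, ← Complex.ofReal_pow]
      ring
    rw [hre] at h0
    linarith
  have hd := discrim_le_zero hdisc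
  rw [discrim] at hd
  have hAx2 : ‖A x‖^2 ≤ 2*r*(inner ℂ (A x) x : ℂ).re := by
    have hQA := hQ2 (A x)
    have hQx0 := hQ0 x
    rcases eq_or_lt_of_le (norm_nonneg (A x)) with h0 | h0
    · rw [← h0]
      have : (0:ℝ)^2 = 0 := by norm_num
      rw [this]
      exact mul_nonneg (mul_nonneg (by norm_num) hr) hQx0
    · have hm : 0 < ‖A x‖^2 := by positivity
      nlinarith [mul_le_mul_of_nonneg_right hQA hQx0]
  -- ‖P x‖² ≤ r²
  have hPxapp : P x = (r:ℂ) • x - A x := by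
    rw [hAapp]; abel
  have hni : ∀ u : H, (inner ℂ u u : ℂ).re = ‖u‖^2 := fun u => by
    simpa using inner_self_eq_norm_sq (𝕜 := ℂ) u
  have hPx : ‖P x‖^2 ≤ r^2 := by
    have h1 : (inner ℂ (P x) (P x) : ℂ) = (r:ℂ)*(r:ℂ)*inner ℂ x x - (r:ℂ)*inner ℂ x (A x)
        - (r:ℂ)*inner ℂ (A x) x + inner ℂ (A x) (A x) := by
      rw [hPxapp]
      simp only [inner_sub_left, inner_sub_right, inner_smul_left, inner_smul_right,
        Complex.conj_ofReal]
      ring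
    have h2 := congrArg Complex.re h1
    have h4 : (inner ℂ x (A x) : ℂ).re = (inner ℂ (A x) x : ℂ).re := by
      rw [← inner_conj_symm (A x) x, Complex.conj_re]
    simp only [Complex.add_re, Complex.sub_re, Complex.mul_re, Complex.mul_im,
      Complex.ofReal_re, Complex.ofReal_im, zero_mul, mul_zero, sub_zero, zero_sub,
      neg_zero, add_zero, zero_add] at h2
    rw [hni, hni, hni, h4, hx] at h2
    have h6 : ‖P x‖^2 = r*r - 2*(r*(inner ℂ (A x) x : ℂ).re) + ‖A x‖^2 := by
      rw [h2]; ring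
    nlinarith [hAx2]
  -- the inner ℂ product identity
  have hinner2 : (inner ℂ (S x) (adjoint S x) : ℂ) = ((‖z‖ : ℝ) : ℂ) := by
    rw [adjoint_inner_right]
    have hSS : S (S x) = (v*v) • ((T*T) x) := by
      rw [hSapp, hSapp, map_smul, smul_smul]
      rfl
    rw [hSS, inner_smul_left, map_mul, ← hzdef]
    exact hrot
  have hPx2 : ‖P x‖^2 * 4 = ‖S x‖^2 + ‖adjoint S x‖^2 + 2*‖z‖ := by
    have h1 : (inner ℂ (P x) (P x) : ℂ) * 4 = inner ℂ (S x) (S x)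
        + inner ℂ (adjoint S x) (adjoint S x) + 2*((‖z‖ : ℝ) : ℂ) := by
      rw [hPapp, inner_smul_left, inner_smul_right, inner_add_left, inner_add_right,
        inner_add_right]
      have h3 : (inner ℂ (adjoint S x) (S x) : ℂ) = ((‖z‖ : ℝ) : ℂ) := by
        rw [← inner_conj_symm, hinner2, Complex.conj_ofReal]
      rw [h3, hinner2]
      have h5 : (starRingEnd ℂ) (2⁻¹ : ℂ) = (2⁻¹ : ℂ) := by
        simp [Complex.ext_iff]
      rw [h5]; ring
    have h2 := congrArg Complex.re h1
    simp only [Complex.add_re, Complex.mul_re, Complex.ofReal_re, Complex.ofReal_im,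
      Complex.re_ofNat, Complex.im_ofNat, zero_mul, sub_zero, mul_zero] at h2
    rw [hni, hni, hni] at h2
    linarith [h2]
  have hcs : ‖z‖ ≤ ‖S x‖ * ‖adjoint S x‖ := by
    have h1 : ‖z‖ = ‖(inner ℂ (S x) (adjoint S x) : ℂ)‖ := by
      rw [hinner2, Complex.norm_real, Real.norm_eq_abs, abs_of_nonneg (norm_nonneg z)]
    rw [h1]
    exact norm_inner_le_norm _ _
  have h6 : ‖S x‖ * ‖adjoint S x‖ ≤ (‖S x‖^2 + ‖adjoint S x‖^2)/2 := by
    nlinarith [sq_nonneg (‖S x‖ - ‖adjoint S x‖)]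
  linarith

lemma homog {H : Type*} [NormedAddCommGroup H] [InnerProductSpace ℂ H]
    (T : H →L[ℂ] H) (r : ℝ)
    (h : ∀ y : H, ‖y‖ = 1 → ‖(inner ℂ (T y) y : ℂ)‖ ≤ r) :
    ∀ y : H, ‖(inner ℂ (T y) y : ℂ)‖ ≤ r * ‖y‖ ^ 2 := by
  intro y
  rcases eq_or_ne y 0 with h0 | h0
  · simp [h0]
  · have hy : (0:ℝ) < ‖y‖ := norm_pos_iff.2 h0
    set c : ℂ := ((‖y‖⁻¹ : ℝ) : ℂ) with hc
    have hu : ‖c • y‖ = 1 := by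
      rw [norm_smul, hc, Complex.norm_real, Real.norm_eq_abs,
        abs_of_nonneg (inv_nonneg.2 (norm_nonneg y)), inv_mul_cancel₀ (ne_of_gt hy)]
    have h1 := h (c • y) hu
    rw [map_smul, inner_smul_left, inner_smul_right] at h1
    have h2 : ‖((starRingEnd ℂ) c * (c * inner ℂ (T y) y))‖ =
        ‖y‖⁻¹ * (‖y‖⁻¹ * ‖(inner ℂ (T y) y)‖) := by
      rw [norm_mul, norm_mul, Complex.norm_conj, hc, Complex.norm_real, Real.norm_eq_abs,
        abs_of_nonneg (inv_nonneg.2 (norm_nonneg y))]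
    rw [h2] at h1
    calc ‖(inner ℂ (T y) y : ℂ)‖
        = (‖y‖*‖y‖) * (‖y‖⁻¹*(‖y‖⁻¹*‖(inner ℂ (T y) y)‖)) := by
          field_simp
      _ ≤ (‖y‖*‖y‖) * r := mul_le_mul_of_nonneg_left h1 (by positivity)
      _ = r * ‖y‖^2 := by ring

theorem stmt_3 {H : Type*} [NormedAddCommGroup H] [InnerProductSpace ℂ H] [CompleteSpace H]
    (B C : H →L[ℂ] H) :
    (er B C) ^ 2 ≥ (1 / 2) * nr (B * C + C * B) := by
  have hbdd : BddAbove {r : ℝ | ∃ x : H, ‖x‖ = 1 ∧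
      r = Real.sqrt (‖(inner ℂ (B x) x : ℂ)‖ ^ 2 + ‖(inner ℂ (C x) x : ℂ)‖ ^ 2)} := by
    refine ⟨Real.sqrt (‖B‖^2 + ‖C‖^2), ?_⟩
    rintro s ⟨x, hx, rfl⟩
    apply Real.sqrt_le_sqrt
    have hB : ‖(inner ℂ (B x) x : ℂ)‖ ≤ ‖B‖ := by
      calc ‖(inner ℂ (B x) x : ℂ)‖ = ‖(inner ℂ (B x) x : ℂ)‖ := rfl
        _ ≤ ‖B x‖ * ‖x‖ := norm_inner_le_norm _ _
        _ ≤ (‖B‖ * ‖x‖) * ‖x‖ := by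
            apply mul_le_mul_of_nonneg_right (B.le_opNorm x) (norm_nonneg x)
        _ = ‖B‖ := by rw [hx]; ring
    have hC : ‖(inner ℂ (C x) x : ℂ)‖ ≤ ‖C‖ := by
      calc ‖(inner ℂ (C x) x : ℂ)‖ = ‖(inner ℂ (C x) x : ℂ)‖ := rfl
        _ ≤ ‖C x‖ * ‖x‖ := norm_inner_le_norm _ _
        _ ≤ (‖C‖ * ‖x‖) * ‖x‖ := by
            apply mul_le_mul_of_nonneg_right (C.le_opNorm x) (norm_nonneg x)
        _ = ‖C‖ := by rw [hx]; ring
    have h1 : (0:ℝ) ≤ ‖(inner ℂ (B x) x : ℂ)‖ := norm_nonneg _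
    have h2 : (0:ℝ) ≤ ‖(inner ℂ (C x) x : ℂ)‖ := norm_nonneg _
    nlinarith
  have her0 : 0 ≤ er B C := by
    rw [er]
    apply Real.sSup_nonneg
    rintro s ⟨x, hx, rfl⟩
    positivity
  set R : ℝ := Real.sqrt 2 * er B C with hR
  have hR0 : 0 ≤ R := mul_nonneg (Real.sqrt_nonneg 2) her0
  have hsum : ∀ x : H, ‖x‖ = 1 →
      ‖(inner ℂ ((B+C) x) x : ℂ)‖ ≤ R ∧ ‖(inner ℂ ((B-C) x) x : ℂ)‖ ≤ R := by
    intro x hx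
    have hmem : Real.sqrt (‖(inner ℂ (B x) x : ℂ)‖ ^ 2
        + ‖(inner ℂ (C x) x : ℂ)‖ ^ 2) ≤ er B C := by
      rw [er]
      exact le_csSup hbdd ⟨x, hx, rfl⟩
    have key2 : ∀ w : ℂ, ‖w‖ ≤ ‖(inner ℂ (B x) x : ℂ)‖
        + ‖(inner ℂ (C x) x : ℂ)‖ → ‖w‖ ≤ R := by
      intro w hw
      have h2 : (‖(inner ℂ (B x) x : ℂ)‖ + ‖(inner ℂ (C x) x : ℂ)‖)^2
          ≤ 2*(‖(inner ℂ (B x) x : ℂ)‖ ^ 2 + ‖(inner ℂ (C x) x : ℂ)‖ ^ 2) := by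
        nlinarith [sq_nonneg (‖(inner ℂ (B x) x : ℂ)‖ - ‖(inner ℂ (C x) x : ℂ)‖)]
      have h1 : ‖w‖ ≤ Real.sqrt 2 * Real.sqrt (‖(inner ℂ (B x) x : ℂ)‖ ^ 2
          + ‖(inner ℂ (C x) x : ℂ)‖ ^ 2) := by
        rw [← Real.sqrt_mul (by norm_num : (0:ℝ) ≤ 2)]
        calc ‖w‖ ≤ ‖(inner ℂ (B x) x : ℂ)‖ + ‖(inner ℂ (C x) x : ℂ)‖ := hw
          _ = Real.sqrt ((‖(inner ℂ (B x) x : ℂ)‖ + ‖(inner ℂ (C x) x : ℂ)‖)^2) :=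
              (Real.sqrt_sq (by positivity)).symm
          _ ≤ _ := Real.sqrt_le_sqrt h2
      exact h1.trans (mul_le_mul_of_nonneg_left hmem (Real.sqrt_nonneg 2))
    constructor
    · apply key2
      rw [ContinuousLinearMap.add_apply, inner_add_left]
      exact norm_add_le _ _
    · apply key2
      rw [ContinuousLinearMap.sub_apply, inner_sub_left]
      simpa using norm_sub_le_norm_sub_add_norm_sub (inner ℂ (B x) x : ℂ) 0 (inner ℂ (C x) x : ℂ)
  have hBC : nr (B*C + C*B) ≤ 2 * (er B C)^2 := by
    rw [nr]
    apply Real.sSup_le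
    · rintro s ⟨x, hx, rfl⟩
      have h1 := key_ineq (B+C) R hR0 (homog _ _ (fun y hy => (hsum y hy).1)) x hx
      have h2 := key_ineq (B-C) R hR0 (homog _ _ (fun y hy => (hsum y hy).2)) x hx
      have hop : (B+C)*(B+C) - (B-C)*(B-C) = (B*C + C*B) + (B*C + C*B) := by
        noncomm_ring
      have h3 : (inner ℂ (((B+C)*(B+C)) x) x : ℂ) - (inner ℂ (((B-C)*(B-C)) x) x : ℂ)
          = inner ℂ ((B*C+C*B) x) x + inner ℂ ((B*C+C*B) x) x := by
        rw [← inner_sub_left, ← inner_add_left, ← ContinuousLinearMap.sub_apply,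
          ← ContinuousLinearMap.add_apply, hop]
      have h4 : 2 * ‖(inner ℂ ((B*C+C*B) x) x : ℂ)‖
          ≤ ‖(inner ℂ (((B+C)*(B+C)) x) x : ℂ)‖
            + ‖(inner ℂ (((B-C)*(B-C)) x) x : ℂ)‖ := by
        calc 2 * ‖(inner ℂ ((B*C+C*B) x) x : ℂ)‖
            = ‖((inner ℂ ((B*C+C*B) x) x : ℂ) + (inner ℂ ((B*C+C*B) x) x : ℂ))‖ := by
              rw [← two_mul, norm_mul, Complex.norm_two]
          _ = ‖((inner ℂ (((B+C)*(B+C)) x) x : ℂ) - (inner ℂ (((B-C)*(B-C)) x) x : ℂ))‖ := by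
              rw [h3]
          _ ≤ _ := by
              exact norm_sub_le _ _
      have hsq : R^2 = 2 * (er B C)^2 := by
        rw [hR, mul_pow, Real.sq_sqrt (by norm_num : (0:ℝ) ≤ 2)]
      linarith
    · positivity
  linarith
end

section
/- For a bounded linear operator T on a complex Hilbert space H, w(T)² ≥ (1/8)·‖T*T + TT*‖ + (1/4)·(‖Re(T)‖² + ‖Im(T)‖²) + (1/2)·|‖Re(T)‖² − ‖Im(T)‖²|. -/
open ContinuousLinearMap

local notation "⟪" x ", " y "⟫" => @inner ℂ _ _ x y

lemma norm_le_of_abs_inner' {H : Type*} [NormedAddCommGroup H] [InnerProductSpace ℂ H]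
    [CompleteSpace H] (A : H →L[ℂ] H) (hA : IsSelfAdjoint A) (c : ℝ) (hc : 0 ≤ c)
    (h : ∀ x : H, ‖x‖ = 1 → ‖⟪A x, x⟫‖ ≤ c) : ‖A‖ ≤ c := by
  -- homogeneous version
  have h' : ∀ x : H, ‖⟪A x, x⟫‖ ≤ c * ‖x‖ ^ 2 := by
    intro x
    rcases eq_or_ne x 0 with rfl | hx
    · simp
    · have hn : ‖x‖ ≠ 0 := norm_ne_zero_iff.mpr hx
      have hu : ‖((‖x‖ : ℂ))⁻¹ • x‖ = 1 := by
        rw [norm_smul, norm_inv, Complex.norm_real, Real.norm_eq_abs,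
          abs_of_nonneg (norm_nonneg x), inv_mul_cancel₀ hn]
      have key := h _ hu
      rw [map_smul, inner_smul_left, inner_smul_right, norm_mul, norm_mul] at key
      simp only [map_inv₀, Complex.norm_conj, norm_inv, Complex.norm_real, norm_norm,
        abs_of_nonneg (norm_nonneg x)] at key
      have hpos : (0:ℝ) < ‖x‖ := lt_of_le_of_ne (norm_nonneg x) (Ne.symm hn)
      calc ‖⟪A x, x⟫‖
          = ‖x‖^2 * (‖x‖⁻¹ * (‖x‖⁻¹ * ‖⟪A x, x⟫‖)) := by field_simp
        _ ≤ ‖x‖^2 * c := by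
            apply mul_le_mul_of_nonneg_left _ (by positivity)
            exact key
        _ = c * ‖x‖^2 := by ring
  -- polarization bound
  have hre : ∀ x y : H, |(⟪A x, y⟫).re| ≤ c / 2 * (‖x‖ ^ 2 + ‖y‖ ^ 2) := by
    intro x y
    have e2 : ⟪A y, x⟫ = starRingEnd ℂ ⟪A x, y⟫ := by
      nth_rewrite 1 [← hA.adjoint_eq]
      rw [adjoint_inner_left, ← inner_conj_symm]
    have e1 : ⟪A (x+y), x+y⟫ - ⟪A (x-y), x-y⟫ = 2 * (⟪A x, y⟫ + ⟪A y, x⟫) := by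
      simp only [map_add, map_sub, inner_add_left, inner_add_right, inner_sub_left,
        inner_sub_right]
      ring
    have e3 : (⟪A (x+y), x+y⟫ - ⟪A (x-y), x-y⟫).re = 4 * (⟪A x, y⟫).re := by
      rw [e1, e2, Complex.add_conj]
      simp
      ring
    have b1 : |(⟪A (x+y), x+y⟫).re| ≤ c * ‖x+y‖^2 :=
      le_trans (Complex.abs_re_le_norm _) (h' _)
    have b2 : |(⟪A (x-y), x-y⟫).re| ≤ c * ‖x-y‖^2 :=
      le_trans (Complex.abs_re_le_norm _) (h' _)
    have par : ‖x+y‖^2 + ‖x-y‖^2 = 2 * (‖x‖^2 + ‖y‖^2) := by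
      have := parallelogram_law_with_norm ℂ x y
      nlinarith [this]
    have h4 : |4 * (⟪A x, y⟫).re| ≤ c * ‖x+y‖^2 + c * ‖x-y‖^2 := by
      rw [← e3, Complex.sub_re]
      exact le_trans (abs_sub _ _) (add_le_add b1 b2)
    rw [abs_mul, abs_of_nonneg (by norm_num : (0:ℝ) ≤ 4)] at h4
    nlinarith [h4, par]
  -- conclude
  refine A.opNorm_le_bound hc (fun x => ?_)
  rcases eq_or_ne (A x) 0 with h0 | h0
  · simp [h0]; positivity
  · have hAx : (0:ℝ) < ‖A x‖ := norm_pos_iff.mpr h0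
    set t : ℝ := ‖x‖ / ‖A x‖ with ht
    have key := hre x (((t : ℝ) : ℂ) • A x)
    rw [inner_smul_right] at key
    have hret : (((t : ℝ) : ℂ) * ⟪A x, A x⟫).re = t * ‖A x‖^2 := by
      rw [← inner_self_eq_norm_sq (𝕜 := ℂ) (A x)]
      simp [Complex.mul_re]
    have hnt : ‖((t : ℝ) : ℂ) • A x‖ = t * ‖A x‖ := by
      rw [norm_smul, Complex.norm_real, Real.norm_eq_abs,
        abs_of_nonneg (div_nonneg (norm_nonneg x) (norm_nonneg (A x)))]
    rw [hret, hnt] at key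
    have ht' : t * ‖A x‖ = ‖x‖ := by rw [ht]; field_simp
    have habs : t * ‖A x‖^2 ≤ |t * ‖A x‖^2| := le_abs_self _
    have : t * ‖A x‖^2 ≤ c / 2 * (‖x‖^2 + (t * ‖A x‖)^2) := le_trans habs key
    rw [ht'] at this
    have hx0 : (0:ℝ) < ‖x‖ ∨ ‖x‖ = 0 := by
      rcases eq_or_lt_of_le (norm_nonneg x) with h | h
      · exact Or.inr h.symm
      · exact Or.inl h
    rcases hx0 with hx0 | hx0
    · have : ‖x‖ * ‖A x‖ ≤ c * ‖x‖^2 := by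
        have e : t * ‖A x‖^2 = ‖x‖ * ‖A x‖ := by rw [ht]; field_simp
        nlinarith [this]
      nlinarith [this, hx0]
    · exfalso
      have : x = 0 := norm_eq_zero.mp hx0
      rw [this] at h0
      simp at h0

theorem stmt_6 {H : Type*} [NormedAddCommGroup H] [InnerProductSpace ℂ H] [CompleteSpace H]
    (T : H →L[ℂ] H) :
    nr T ^ 2 ≥ (1 / 8) * ‖adjoint T * T + T * adjoint T‖
      + (1 / 4) * (‖(2 : ℂ)⁻¹ • (T + adjoint T)‖ ^ 2
                   + ‖(2 * Complex.I)⁻¹ • (T - adjoint T)‖ ^ 2)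
      + (1 / 2) * |‖(2 : ℂ)⁻¹ • (T + adjoint T)‖ ^ 2
                   - ‖(2 * Complex.I)⁻¹ • (T - adjoint T)‖ ^ 2| := by
  set A : H →L[ℂ] H := (2 : ℂ)⁻¹ • (T + adjoint T) with hAdef
  set B : H →L[ℂ] H := (2 * Complex.I)⁻¹ • (T - adjoint T) with hBdef
  -- self-adjointness
  have hA : IsSelfAdjoint A := by
    rw [IsSelfAdjoint, hAdef]
    rw [star_smul, star_add]
    simp [star_eq_adjoint, adjoint_adjoint, add_comm]
  have hB : IsSelfAdjoint B := by
    rw [IsSelfAdjoint, hBdef]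
    rw [star_smul, star_sub]
    simp only [star_eq_adjoint, adjoint_adjoint, star_inv₀, star_mul', Complex.star_def,
      Complex.conj_I, map_ofNat]
    rw [show ((2:ℂ) * -Complex.I)⁻¹ = -((2*Complex.I)⁻¹) by rw [mul_neg, inv_neg]]
    rw [neg_smul, ← smul_neg, neg_sub]
  -- the algebraic identity
  have hkey : adjoint T * T + T * adjoint T = (2:ℂ) • (A * A + B * B) := by
    rw [hAdef, hBdef]
    have hI : ((2*Complex.I)⁻¹ * (2*Complex.I)⁻¹) = -(4:ℂ)⁻¹ := by
      rw [← mul_inv]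
      have h4 : (2*Complex.I) * (2*Complex.I) = -4 := by
        linear_combination 4 * Complex.I_sq
      rw [h4]; norm_num
    simp only [smul_mul_assoc, mul_smul_comm, mul_add, add_mul, mul_sub, sub_mul, smul_add,
      smul_sub, smul_smul, hI]
    module
  by_cases hex : ∃ x : H, ‖x‖ = 1
  · obtain ⟨e, he⟩ := hex
    set S := {r : ℝ | ∃ x : H, ‖x‖ = 1 ∧ r = ‖(inner ℂ (T x) x : ℂ)‖} with hS
    have hbdd : BddAbove S := by
      refine ⟨‖T‖, fun r hr => ?_⟩
      obtain ⟨x, hx, rfl⟩ := hr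
      calc ‖⟪T x, x⟫‖ = ‖⟪T x, x⟫‖ := rfl
        _ ≤ ‖T x‖ * ‖x‖ := norm_inner_le_norm _ _
        _ ≤ ‖T‖ * ‖x‖ * ‖x‖ := by
            exact mul_le_mul_of_nonneg_right (T.le_opNorm x) (norm_nonneg x)
        _ = ‖T‖ := by rw [hx]; ring
    have hmem : ∀ x : H, ‖x‖ = 1 → ‖⟪T x, x⟫‖ ≤ nr T := fun x hx =>
      le_csSup hbdd ⟨x, hx, rfl⟩
    have h0 : 0 ≤ nr T := le_trans (norm_nonneg _) (hmem e he)
    -- inner products of A and B vs T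
    have hinnerA : ∀ x : H, ⟪A x, x⟫ = (((⟪T x, x⟫).re : ℝ) : ℂ) := by
      intro x
      rw [hAdef]
      simp only [coe_smul', Pi.smul_apply, add_apply, inner_smul_left, inner_add_left]
      have hz : ⟪x, T x⟫ = starRingEnd ℂ ⟪T x, x⟫ := by rw [inner_conj_symm]
      rw [adjoint_inner_left, hz, Complex.add_conj]
      simp only [map_inv₀, Complex.conj_ofNat]
      push_cast
      ring
    have hinnerB : ∀ x : H, ⟪B x, x⟫ = -(((⟪T x, x⟫).im : ℝ) : ℂ) := by
      intro x
      rw [hBdef]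
      simp only [coe_smul', Pi.smul_apply, sub_apply, inner_smul_left, inner_sub_left]
      have hz : ⟪x, T x⟫ = starRingEnd ℂ ⟪T x, x⟫ := by rw [inner_conj_symm]
      rw [adjoint_inner_left, hz, Complex.sub_conj]
      simp only [map_inv₀, map_mul, Complex.conj_I, Complex.conj_ofNat]
      rw [mul_neg, inv_neg]
      field_simp
      push_cast
      ring
    have haA : ‖A‖ ≤ nr T := by
      refine norm_le_of_abs_inner' A hA _ h0 (fun x hx => ?_)
      rw [hinnerA x]
      calc ‖(((⟪T x, x⟫).re : ℝ) : ℂ)‖ = |(⟪T x, x⟫).re| := by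
            rw [Complex.norm_real, Real.norm_eq_abs]
        _ ≤ ‖⟪T x, x⟫‖ := Complex.abs_re_le_norm _
        _ ≤ nr T := hmem x hx
    have haB : ‖B‖ ≤ nr T := by
      refine norm_le_of_abs_inner' B hB _ h0 (fun x hx => ?_)
      rw [hinnerB x]
      calc ‖(-(((⟪T x, x⟫).im : ℝ) : ℂ))‖ = |(⟪T x, x⟫).im| := by
            rw [norm_neg, Complex.norm_real, Real.norm_eq_abs]
        _ ≤ ‖⟪T x, x⟫‖ := Complex.abs_im_le_norm _
        _ ≤ nr T := hmem x hx
    have hnorm : ‖adjoint T * T + T * adjoint T‖ ≤ 2 * (‖A‖^2 + ‖B‖^2) := by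
      rw [hkey, norm_smul]
      have h2 : ‖(2:ℂ)‖ = 2 := by simp
      rw [h2]
      have : ‖A * A + B * B‖ ≤ ‖A‖^2 + ‖B‖^2 := by
        calc ‖A * A + B * B‖ ≤ ‖A * A‖ + ‖B * B‖ := norm_add_le _ _
          _ ≤ ‖A‖ * ‖A‖ + ‖B‖ * ‖B‖ := add_le_add (norm_mul_le _ _) (norm_mul_le _ _)
          _ = ‖A‖^2 + ‖B‖^2 := by ring
      linarith
    have wA : ‖A‖^2 ≤ nr T^2 := by nlinarith [norm_nonneg A]
    have wB : ‖B‖^2 ≤ nr T^2 := by nlinarith [norm_nonneg B]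
    rcases abs_cases (‖A‖^2 - ‖B‖^2) with ⟨habs, _⟩ | ⟨habs, _⟩ <;> rw [habs] <;> linarith
  · -- trivial space
    have hzero : ∀ x : H, x = 0 := by
      intro x
      by_contra hx
      exact hex ⟨(‖x‖ : ℂ)⁻¹ • x, by
        rw [norm_smul, norm_inv, Complex.norm_real, Real.norm_eq_abs,
          abs_of_nonneg (norm_nonneg x), inv_mul_cancel₀ (norm_ne_zero_iff.mpr hx)]⟩
    have hT : T = 0 := by ext x; rw [hzero x]; simp
    have hnr : nr T = 0 := by
      rw [nr]
      convert Real.sSup_empty using 2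
      ext r
      simp only [Set.mem_setOf_eq, Set.mem_empty_iff_false, iff_false]
      rintro ⟨x, hx, -⟩
      rw [hzero x] at hx; simp at hx
    have hA0 : A = 0 := by rw [hAdef, hT]; simp
    have hB0 : B = 0 := by rw [hBdef, hT]; simp
    have hadj0 : adjoint (0 : H →L[ℂ] H) = 0 := by rw [← star_eq_adjoint]; simp
    rw [hnr, hT, hA0, hB0, hadj0]
    simp only [zero_mul, mul_zero, add_zero, zero_add, norm_zero, sub_zero, abs_zero]
    norm_num
end

section
/- For a bounded linear operator T on a complex Hilbert space H, w(T)² ≥ (1/8)·‖T*T + TT*‖ + (1/8)·(‖Re(T)+Im(T)‖² + ‖Re(T)−Im(T)‖²) + (1/4)·|‖Re(T)+Im(T)‖² − ‖Re(T)−Im(T)‖²|. -/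
open ContinuousLinearMap

/-- For a self-adjoint operator, the norm is bounded by the numerical radius. -/
lemma selfadj_norm_le {H : Type*} [NormedAddCommGroup H] [InnerProductSpace ℂ H]
    [CompleteSpace H] (S : H →L[ℂ] H) (hS : IsSelfAdjoint S) {M : ℝ} (hM : 0 ≤ M)
    (h : ∀ x : H, ‖x‖ = 1 → ‖(inner ℂ (S x) x : ℂ)‖ ≤ M) : ‖S‖ ≤ M := by
  have hsym := hS.isSymmetric
  -- scale-invariant form
  have key : ∀ x : H, ‖(inner ℂ (S x) x : ℂ)‖ ≤ M * ‖x‖ ^ 2 := by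
    intro x
    rcases eq_or_ne x 0 with rfl | hx
    · simp
    · have hn : ‖x‖ ≠ 0 := norm_ne_zero_iff.2 hx
      have hn0 : (0:ℝ) < ‖x‖ := norm_pos_iff.2 hx
      have hu : ‖((‖x‖⁻¹ : ℝ) : ℂ) • x‖ = 1 := by
        simp [norm_smul, hn]
      have h1 := h _ hu
      simp only [map_smul, inner_smul_left, inner_smul_right, map_mul, norm_mul, Complex.norm_conj,
        Complex.norm_real, Real.norm_eq_abs, abs_of_nonneg (inv_nonneg.2 hn0.le)] at h1
      have h2 := mul_le_mul_of_nonneg_left h1 (le_of_lt (by positivity : (0:ℝ) < ‖x‖^2))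
      calc ‖(inner ℂ (S x) x : ℂ)‖
          = ‖x‖^2 * (‖x‖⁻¹ * (‖x‖⁻¹ * ‖(inner ℂ (S x) x : ℂ)‖)) := by
            field_simp
        _ ≤ ‖x‖^2 * M := h2
        _ = M * ‖x‖^2 := by ring
  -- polarization
  have hpol : ∀ x y : H, 4 * (inner ℂ (S x) y : ℂ).re
      = (inner ℂ (S (x+y)) (x+y) : ℂ).re - (inner ℂ (S (x-y)) (x-y) : ℂ).re := by
    intro x y
    have h1 : (inner ℂ (S y) x : ℂ) = (starRingEnd ℂ) (inner ℂ (S x) y : ℂ) := by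
      rw [← hS.adjoint_eq, adjoint_inner_left, hS.adjoint_eq]
      exact (inner_conj_symm y (S x)).symm
    simp only [map_add, map_sub, inner_add_left, inner_add_right, inner_sub_left,
      inner_sub_right, Complex.add_re, Complex.sub_re, h1, Complex.conj_re]
    ring
  have hre : ∀ x y : H, (inner ℂ (S x) y : ℂ).re ≤ M / 2 * (‖x‖^2 + ‖y‖^2) := by
    intro x y
    have h1 : (inner ℂ (S (x+y)) (x+y) : ℂ).re ≤ M * ‖x+y‖^2 :=
      le_trans (Complex.re_le_norm _) (key _)
    have h2 : -(M * ‖x-y‖^2) ≤ (inner ℂ (S (x-y)) (x-y) : ℂ).re := by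
      have := le_trans (neg_abs_le _) (neg_le_neg (le_trans (Complex.abs_re_le_norm _) (key (x-y))))
      linarith [abs_le.mp (le_trans (Complex.abs_re_le_norm _) (key (x-y))) |>.1]
    have hp : ‖x+y‖^2 + ‖x-y‖^2 = 2*(‖x‖^2 + ‖y‖^2) := by
      have := parallelogram_law_with_norm ℂ x y
      ring_nf
      ring_nf at this
      linarith
    have h4 := hpol x y
    nlinarith [h1, h2, h4, hp]
  -- operator norm bound
  refine S.opNorm_le_bound hM ?_
  intro x
  rcases eq_or_ne (S x) 0 with h0 | h0
  · simp [h0]; positivity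
  · have hSx : (0:ℝ) < ‖S x‖ := norm_pos_iff.2 h0
    set c : ℝ := ‖x‖ / ‖S x‖ with hc
    have hc0 : 0 ≤ c := by positivity
    have hy : ‖(c : ℂ) • S x‖ = c * ‖S x‖ := by
      simp [norm_smul, abs_of_nonneg hc0]
    have h1 := hre x ((c : ℂ) • S x)
    rw [inner_smul_right] at h1
    have h2 : ((c:ℂ) * (inner ℂ (S x) (S x) : ℂ)).re = c * ‖S x‖^2 := by
      rw [inner_self_eq_norm_sq_to_K (𝕜 := ℂ)]
      simp [Complex.mul_re, ← Complex.ofReal_pow]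
    rw [h2, hy] at h1
    have hcs : c * ‖S x‖ = ‖x‖ := by rw [hc, div_mul_cancel₀ _ hSx.ne']
    rw [hcs] at h1
    have h3 : c * ‖S x‖^2 = ‖x‖ * ‖S x‖ := by
      rw [hc]; field_simp
    rw [h3] at h1
    -- h1 : ‖x‖ * ‖S x‖ ≤ M/2 * (‖x‖^2 + ‖x‖^2)
    rcases eq_or_ne x 0 with rfl | hx
    · exact absurd (map_zero S) h0
    · have hxp : (0:ℝ) < ‖x‖ := norm_pos_iff.2 hx
      nlinarith [h1]

set_option maxHeartbeats 1600000 in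
theorem stmt_7 {H : Type*} [NormedAddCommGroup H] [InnerProductSpace ℂ H] [CompleteSpace H]
    (T : H →L[ℂ] H) :
    nr T ^ 2 ≥ (1 / 8) * ‖adjoint T * T + T * adjoint T‖
      + (1 / 8) * (‖(2 : ℂ)⁻¹ • (T + adjoint T) + (2 * Complex.I)⁻¹ • (T - adjoint T)‖ ^ 2
                   + ‖(2 : ℂ)⁻¹ • (T + adjoint T) - (2 * Complex.I)⁻¹ • (T - adjoint T)‖ ^ 2)
      + (1 / 4) * |‖(2 : ℂ)⁻¹ • (T + adjoint T) + (2 * Complex.I)⁻¹ • (T - adjoint T)‖ ^ 2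
                   - ‖(2 : ℂ)⁻¹ • (T + adjoint T) - (2 * Complex.I)⁻¹ • (T - adjoint T)‖ ^ 2| := by
  set P := (2 : ℂ)⁻¹ • (T + adjoint T) + (2 * Complex.I)⁻¹ • (T - adjoint T) with hPdef
  set Q := (2 : ℂ)⁻¹ • (T + adjoint T) - (2 * Complex.I)⁻¹ • (T - adjoint T) with hQdef
  -- basic facts about nr
  have hbdd : BddAbove {r : ℝ | ∃ x : H, ‖x‖ = 1 ∧ r = ‖(inner ℂ (T x) x : ℂ)‖} := by
    refine ⟨‖T‖, ?_⟩
    rintro r ⟨x, hx, rfl⟩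
    calc ‖(inner ℂ (T x) x : ℂ)‖ = ‖(inner ℂ (T x) x : ℂ)‖ := rfl
      _ ≤ ‖T x‖ * ‖x‖ := norm_inner_le_norm _ _
      _ ≤ ‖T‖ * ‖x‖ * ‖x‖ := by gcongr; exact T.le_opNorm x
      _ = ‖T‖ := by rw [hx]; ring
  have hw0 : 0 ≤ nr T := by
    apply Real.sSup_nonneg
    rintro r ⟨x, hx, rfl⟩
    positivity
  have hmem : ∀ x : H, ‖x‖ = 1 → ‖(inner ℂ (T x) x : ℂ)‖ ≤ nr T := by
    intro x hx
    exact le_csSup hbdd ⟨x, hx, rfl⟩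
  -- self-adjointness of P and Q
  have hPsa : IsSelfAdjoint P := by
    rw [IsSelfAdjoint, hPdef]
    simp only [star_add, star_sub, star_smul, star_eq_adjoint, adjoint_adjoint,
      RCLike.star_def, map_inv₀, map_mul, map_ofNat, Complex.conj_I]
    match_scalars <;> simp [Complex.ext_iff] <;> norm_num
  have hQsa : IsSelfAdjoint Q := by
    rw [IsSelfAdjoint, hQdef]
    simp only [star_sub, star_add, star_smul, star_eq_adjoint, adjoint_adjoint,
      RCLike.star_def, map_inv₀, map_mul, map_ofNat, Complex.conj_I]
    match_scalars <;> simp [Complex.ext_iff] <;> norm_num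
  -- numerical radius bounds for P and Q
  have hsqrt2 : (0:ℝ) ≤ Real.sqrt 2 := Real.sqrt_nonneg 2
  have habs : ∀ (z : ℂ) (ε : ℝ), ε = 1 ∨ ε = -1 →
      |z.re + ε * z.im| ≤ Real.sqrt 2 * ‖z‖ := by
    intro z ε hε
    have hz : (‖z‖)^2 = z.re^2 + z.im^2 := by
      rw [Complex.sq_norm, Complex.normSq_apply]; ring
    have h1 : (z.re + ε * z.im)^2 ≤ 2 * (‖z‖)^2 := by
      rcases hε with rfl | rfl <;> nlinarith [sq_nonneg (z.re - z.im), sq_nonneg (z.re + z.im)]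
    have := Real.sqrt_le_sqrt h1
    rw [Real.sqrt_sq_eq_abs, show (2:ℝ) * (‖z‖)^2 = ((Real.sqrt 2 * ‖z‖))^2 by
      rw [mul_pow, Real.sq_sqrt (by norm_num : (0:ℝ) ≤ 2)],
      Real.sqrt_sq (by positivity)] at this
    exact this
  have helperP : ∀ z : ℂ, (starRingEnd ℂ) (2⁻¹ : ℂ) * (z + (starRingEnd ℂ) z)
      + (starRingEnd ℂ) ((2 * Complex.I)⁻¹) * (z - (starRingEnd ℂ) z)
      = ((z.re - z.im : ℝ) : ℂ) := by
    intro z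
    simp [Complex.ext_iff, Complex.div_re, Complex.div_im, Complex.normSq_apply]
    ring
  have helperQ : ∀ z : ℂ, (starRingEnd ℂ) (2⁻¹ : ℂ) * (z + (starRingEnd ℂ) z)
      - (starRingEnd ℂ) ((2 * Complex.I)⁻¹) * (z - (starRingEnd ℂ) z)
      = ((z.re + z.im : ℝ) : ℂ) := by
    intro z
    simp [Complex.ext_iff, Complex.div_re, Complex.div_im, Complex.normSq_apply]
    ring
  have hinner : ∀ x : H, (inner ℂ (P x) x : ℂ) = ((inner ℂ (T x) x : ℂ).re - (inner ℂ (T x) x : ℂ).im : ℝ)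
      ∧ (inner ℂ (Q x) x : ℂ) = ((inner ℂ (T x) x : ℂ).re + (inner ℂ (T x) x : ℂ).im : ℝ) := by
    intro x
    have hadj : (inner ℂ (adjoint T x) x : ℂ) = (starRingEnd ℂ) (inner ℂ (T x) x : ℂ) := by
      rw [adjoint_inner_left, ← inner_conj_symm]
    constructor
    · rw [hPdef]
      rw [show ((2 : ℂ)⁻¹ • (T + adjoint T) + (2 * Complex.I)⁻¹ • (T - adjoint T)) x
          = (2 : ℂ)⁻¹ • (T x + adjoint T x) + (2 * Complex.I)⁻¹ • (T x - adjoint T x) by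
        simp [add_apply, smul_apply, sub_apply]]
      rw [inner_add_left, inner_smul_left, inner_smul_left, inner_add_left, inner_sub_left, hadj]
      exact helperP _
    · rw [hQdef]
      rw [show ((2 : ℂ)⁻¹ • (T + adjoint T) - (2 * Complex.I)⁻¹ • (T - adjoint T)) x
          = (2 : ℂ)⁻¹ • (T x + adjoint T x) - (2 * Complex.I)⁻¹ • (T x - adjoint T x) by
        simp [add_apply, smul_apply, sub_apply]]
      rw [inner_sub_left, inner_smul_left, inner_smul_left, inner_add_left, inner_sub_left, hadj]
      exact helperQ _
  have hPw : ∀ x : H, ‖x‖ = 1 → ‖(inner ℂ (P x) x : ℂ)‖ ≤ Real.sqrt 2 * nr T := by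
    intro x hx
    rw [(hinner x).1, Complex.norm_real, Real.norm_eq_abs]
    calc |(inner ℂ (T x) x : ℂ).re - (inner ℂ (T x) x : ℂ).im|
        = |(inner ℂ (T x) x : ℂ).re + (-1) * (inner ℂ (T x) x : ℂ).im| := by ring_nf
      _ ≤ Real.sqrt 2 * ‖(inner ℂ (T x) x : ℂ)‖ := habs _ _ (Or.inr rfl)
      _ ≤ Real.sqrt 2 * nr T := by gcongr; exact hmem x hx
  have hQw : ∀ x : H, ‖x‖ = 1 → ‖(inner ℂ (Q x) x : ℂ)‖ ≤ Real.sqrt 2 * nr T := by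
    intro x hx
    rw [(hinner x).2, Complex.norm_real, Real.norm_eq_abs]
    calc |(inner ℂ (T x) x : ℂ).re + (inner ℂ (T x) x : ℂ).im|
        = |(inner ℂ (T x) x : ℂ).re + 1 * (inner ℂ (T x) x : ℂ).im| := by ring_nf
      _ ≤ Real.sqrt 2 * ‖(inner ℂ (T x) x : ℂ)‖ := habs _ _ (Or.inl rfl)
      _ ≤ Real.sqrt 2 * nr T := by gcongr; exact hmem x hx
  have hM : (0:ℝ) ≤ Real.sqrt 2 * nr T := by positivity
  have hPn : ‖P‖ ≤ Real.sqrt 2 * nr T := selfadj_norm_le P hPsa hM hPw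
  have hQn : ‖Q‖ ≤ Real.sqrt 2 * nr T := selfadj_norm_le Q hQsa hM hQw
  have hP2 : ‖P‖^2 ≤ 2 * nr T ^ 2 := by
    nlinarith [norm_nonneg P, Real.sq_sqrt (by norm_num : (0:ℝ) ≤ 2), hsqrt2, hw0]
  have hQ2 : ‖Q‖^2 ≤ 2 * nr T ^ 2 := by
    nlinarith [norm_nonneg Q, Real.sq_sqrt (by norm_num : (0:ℝ) ≤ 2), hsqrt2, hw0]
  -- the operator identity
  have hid : P * P + Q * Q = adjoint T * T + T * adjoint T := by
    rw [hPdef, hQdef]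
    ext x
    simp only [mul_apply_eq_comp, add_apply, sub_apply, smul_apply, map_add, map_sub, map_smulₛₗ,
      RingHom.id_apply, map_smul, smul_add, smul_sub, smul_smul]
    match_scalars <;> simp [Complex.ext_iff] <;> norm_num
  have hN : ‖adjoint T * T + T * adjoint T‖ ≤ ‖P‖^2 + ‖Q‖^2 := by
    rw [← hid]
    calc ‖P * P + Q * Q‖ ≤ ‖P * P‖ + ‖Q * Q‖ := norm_add_le _ _
      _ ≤ ‖P‖ * ‖P‖ + ‖Q‖ * ‖Q‖ := by gcongr <;> exact norm_mul_le _ _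
      _ = ‖P‖^2 + ‖Q‖^2 := by ring
  rcases abs_cases (‖P‖^2 - ‖Q‖^2) with ⟨heq, _⟩ | ⟨heq, _⟩ <;> rw [heq] <;> linarith
end

section
/- For bounded linear operators B and C on a complex Hilbert space H and any t ∈ [0,1], w_e(B,C) ≤ ‖t²·B*B + (1−t)²·C*C‖^{1/2} + (1/√2)·(w((1−t)B + tC)² + w((1−t)B − tC)²)^{1/2}. -/
open ContinuousLinearMap

lemma nr_ge {E : Type*} [NormedAddCommGroup E] [InnerProductSpace ℂ E]
    (T : E →L[ℂ] E) (x : E) (hx : ‖x‖ = 1) :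
    ‖(inner ℂ (T x) x : ℂ)‖ ≤ nr T := by
  apply le_csSup
  · refine ⟨‖T‖, ?_⟩
    rintro r ⟨y, hy, rfl⟩
    calc ‖(inner ℂ (T y) y : ℂ)‖ ≤ ‖T y‖ * ‖y‖ := by
          exact norm_inner_le_norm _ _
      _ ≤ ‖T‖ * ‖y‖ * ‖y‖ := by gcongr; exact T.le_opNorm y
      _ = ‖T‖ := by rw [hy]; ring
  · exact ⟨x, hx, rfl⟩

lemma combine_ineq (t b c M Wh : ℝ) (ht0 : 0 ≤ t) (ht1 : t ≤ 1)
    (hM : t^2*b^2 + (1-t)^2*c^2 ≤ M) (hW : (1-t)^2*b^2 + t^2*c^2 ≤ Wh) :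
    Real.sqrt (b^2 + c^2) ≤ Real.sqrt M + Real.sqrt Wh := by
  have ht1' : (0:ℝ) ≤ 1 - t := by linarith
  set s1 := Real.sqrt (t^2*b^2 + (1-t)^2*c^2) with hs1def
  set s2 := Real.sqrt ((1-t)^2*b^2 + t^2*c^2) with hs2def
  have hs1n : 0 ≤ s1 := Real.sqrt_nonneg _
  have hs2n : 0 ≤ s2 := Real.sqrt_nonneg _
  have hs1 : s1^2 = t^2*b^2 + (1-t)^2*c^2 := Real.sq_sqrt (by positivity)
  have hs2 : s2^2 = (1-t)^2*b^2 + t^2*c^2 := Real.sq_sqrt (by positivity)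
  have hprod : (s1*s2)^2 = (t^2*b^2 + (1-t)^2*c^2) * ((1-t)^2*b^2 + t^2*c^2) := by
    rw [mul_pow, hs1, hs2]
  have hgeq : t*(1-t)*(b^2+c^2) ≤ s1*s2 := by
    nlinarith [hprod, sq_nonneg ((t^2-(1-t)^2)*b*c), mul_nonneg hs1n hs2n,
      mul_nonneg (mul_nonneg ht0 ht1') (add_nonneg (sq_nonneg b) (sq_nonneg c))]
  have key : Real.sqrt (b^2 + c^2) ≤ s1 + s2 := by
    have h : b^2 + c^2 ≤ (s1 + s2)^2 := by nlinarith
    calc Real.sqrt (b^2+c^2) ≤ Real.sqrt ((s1+s2)^2) := Real.sqrt_le_sqrt h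
      _ = s1 + s2 := Real.sqrt_sq (by positivity)
  have h1 : s1 ≤ Real.sqrt M := Real.sqrt_le_sqrt hM
  have h2 : s2 ≤ Real.sqrt Wh := Real.sqrt_le_sqrt hW
  linarith

theorem stmt_8 {H : Type*} [NormedAddCommGroup H] [InnerProductSpace ℂ H] [CompleteSpace H]
    (B C : H →L[ℂ] H) (t : ℝ) (ht : t ∈ Set.Icc (0 : ℝ) 1) :
    er B C ≤ ‖t ^ 2 • (adjoint B * B) + (1 - t) ^ 2 • (adjoint C * C)‖ ^ ((1 : ℝ) / 2)
      + (1 / Real.sqrt 2) *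
        (nr ((1 - t) • B + t • C) ^ 2 + nr ((1 - t) • B - t • C) ^ 2) ^ ((1 : ℝ) / 2) := by
  obtain ⟨ht0, ht1⟩ := ht
  have ht1' : (0:ℝ) ≤ 1 - t := by linarith
  set A := t ^ 2 • (adjoint B * B) + (1 - t) ^ 2 • (adjoint C * C) with hAdef
  set w1 := nr ((1 - t) • B + t • C) with hw1def
  set w2 := nr ((1 - t) • B - t • C) with hw2def
  set W := w1 ^ 2 + w2 ^ 2 with hWdef
  have hW0 : (0:ℝ) ≤ W := by positivity
  clear_value A w1 w2 W
  have hrw1 : ‖A‖ ^ ((1:ℝ)/2) = Real.sqrt ‖A‖ := (Real.sqrt_eq_rpow _).symm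
  have hrw2 : W ^ ((1:ℝ)/2) = Real.sqrt W := (Real.sqrt_eq_rpow _).symm
  rw [hrw1, hrw2]
  have hhalf : (1 / Real.sqrt 2) * Real.sqrt W = Real.sqrt (W / 2) := by
    rw [Real.sqrt_div hW0 2]; ring
  rw [hhalf]
  apply Real.sSup_le
  · rintro r ⟨x, hx, rfl⟩
    set p := (inner ℂ (B x) x : ℂ) with hp
    set q := (inner ℂ (C x) x : ℂ) with hq
    set b := ‖p‖ with hb
    set c := ‖q‖ with hc
    have hbB : b ≤ ‖B x‖ := by
      calc b = ‖p‖ := rfl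
        _ ≤ ‖B x‖ * ‖x‖ := norm_inner_le_norm _ _
        _ = ‖B x‖ := by rw [hx, mul_one]
    have hcC : c ≤ ‖C x‖ := by
      calc c = ‖q‖ := rfl
        _ ≤ ‖C x‖ * ‖x‖ := norm_inner_le_norm _ _
        _ = ‖C x‖ := by rw [hx, mul_one]
    have hb0 : 0 ≤ b := norm_nonneg _
    have hc0 : 0 ≤ c := norm_nonneg _
    clear_value p q b c
    -- first piece
    have hAx : (inner ℂ (A x) x : ℂ) = ((t^2 * ‖B x‖^2 + (1-t)^2 * ‖C x‖^2 : ℝ) : ℂ) := by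
      rw [hAdef]
      simp only [add_apply, smul_apply, mul_apply_eq_comp, inner_add_left,
        RCLike.real_smul_eq_coe_smul (K := ℂ), inner_smul_left, adjoint_inner_left,
        inner_self_eq_norm_sq_to_K, RCLike.conj_ofReal]
      norm_cast
    have hAnorm : t^2 * ‖B x‖^2 + (1-t)^2 * ‖C x‖^2 ≤ ‖A‖ := by
      have h1 : ‖(inner ℂ (A x) x : ℂ)‖ ≤ ‖A‖ := by
        calc ‖(inner ℂ (A x) x : ℂ)‖ = ‖(inner ℂ (A x) x : ℂ)‖ :=
              rfl
          _ ≤ ‖A x‖ * ‖x‖ := norm_inner_le_norm _ _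
          _ ≤ ‖A‖ * ‖x‖ * ‖x‖ := by gcongr; exact A.le_opNorm x
          _ = ‖A‖ := by rw [hx]; ring
      rw [hAx, Complex.norm_real, Real.norm_eq_abs, abs_of_nonneg (by positivity)] at h1
      exact h1
    have hM : t^2 * b^2 + (1-t)^2 * c^2 ≤ ‖A‖ := by
      refine le_trans ?_ hAnorm
      have h1 : b^2 ≤ ‖B x‖^2 := pow_le_pow_left₀ hb0 hbB 2
      have h2 : c^2 ≤ ‖C x‖^2 := pow_le_pow_left₀ hc0 hcC 2
      exact add_le_add (mul_le_mul_of_nonneg_left h1 (sq_nonneg t))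
        (mul_le_mul_of_nonneg_left h2 (sq_nonneg (1-t)))
    -- second piece
    set z := (1-t) • p with hz
    set w := t • q with hw
    have hD1 : (inner ℂ (((1 - t) • B + t • C) x) x : ℂ) = z + w := by
      rw [hz, hw, hp, hq]
      simp only [add_apply, smul_apply, inner_add_left,
        RCLike.real_smul_eq_coe_smul (K := ℂ), inner_smul_left, RCLike.conj_ofReal, smul_eq_mul]
    have hD2 : (inner ℂ (((1 - t) • B - t • C) x) x : ℂ) = z - w := by
      rw [hz, hw, hp, hq]
      simp only [sub_apply, smul_apply, inner_sub_left,
        RCLike.real_smul_eq_coe_smul (K := ℂ), inner_smul_left, RCLike.conj_ofReal, smul_eq_mul]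
    clear_value z w
    have hu : ‖z + w‖ ≤ w1 := by
      rw [← hD1, hw1def]
      exact nr_ge _ x hx
    have hv : ‖z - w‖ ≤ w2 := by
      rw [← hD2, hw2def]
      exact nr_ge _ x hx
    have hnz : ‖z‖ = (1-t) * b := by
      rw [hz, norm_smul, Real.norm_eq_abs, abs_of_nonneg ht1', hb]
    have hnw : ‖w‖ = t * c := by
      rw [hw, norm_smul, Real.norm_eq_abs, abs_of_nonneg ht0, hc]
    have hpar : ‖z + w‖^2 + ‖z - w‖^2 = 2 * ((1-t)^2 * b^2 + t^2 * c^2) := by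
      have hpl := parallelogram_law_with_norm ℂ z w
      rw [hnz, hnw] at hpl
      linear_combination hpl
    have hWh : (1-t)^2 * b^2 + t^2 * c^2 ≤ W / 2 := by
      have h1 : ‖z + w‖^2 ≤ w1^2 := pow_le_pow_left₀ (norm_nonneg _) hu 2
      have h2 : ‖z - w‖^2 ≤ w2^2 := pow_le_pow_left₀ (norm_nonneg _) hv 2
      rw [hWdef]; linarith
    exact combine_ineq t b c ‖A‖ (W/2) ht0 ht1 hM hWh
  · have := Real.sqrt_nonneg ‖A‖
    have := Real.sqrt_nonneg (W/2)
    linarith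
end

section
/- For a bounded linear operator T on a complex Hilbert space H, w(T)² ≤ (1/4)·‖T*T + TT*‖ + (1/2)·(‖Re(T)‖² + ‖Im(T)‖²). -/
open ContinuousLinearMap

set_option maxHeartbeats 1000000 in
theorem stmt_10 {H : Type*} [NormedAddCommGroup H] [InnerProductSpace ℂ H] [CompleteSpace H]
    (T : H →L[ℂ] H) :
    nr T ^ 2 ≤ (1 / 4) * ‖adjoint T * T + T * adjoint T‖
      + (1 / 2) * (‖(2 : ℂ)⁻¹ • (T + adjoint T)‖ ^ 2
                   + ‖(2 * Complex.I)⁻¹ • (T - adjoint T)‖ ^ 2) := by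
  set B : H →L[ℂ] H := (2 : ℂ)⁻¹ • (T + adjoint T) with hBdef
  set C : H →L[ℂ] H := (2 * Complex.I)⁻¹ • (T - adjoint T) with hCdef
  set R : ℝ := (1 / 4) * ‖adjoint T * T + T * adjoint T‖ + (1 / 2) * (‖B‖ ^ 2 + ‖C‖ ^ 2)
    with hRdef
  have hR0 : 0 ≤ R := by positivity
  have key : ∀ x : H, ‖x‖ = 1 → ‖(inner ℂ (T x) x : ℂ)‖ ^ 2 ≤ R := by
    intro x hx
    set a : ℂ := (inner ℂ (T x) x : ℂ) with ha
    have hconj : (inner ℂ ((adjoint T) x) x : ℂ) = starRingEnd ℂ a := by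
      rw [adjoint_inner_left, ← inner_conj_symm]
    -- inner of B
    have hBx : (inner ℂ (B x) x : ℂ) = (a.re : ℝ) := by
      simp only [hBdef, coe_smul', Pi.smul_apply, add_apply, inner_smul_left, inner_add_left,
        hconj, ha]
      rw [Complex.add_conj]
      push_cast
      ring_nf
      simp [Complex.ext_iff]
      ring
    have hCx : (inner ℂ (C x) x : ℂ) = (-a.im : ℝ) := by
      simp only [hCdef, coe_smul', Pi.smul_apply, sub_apply, inner_smul_left, inner_sub_left,
        hconj, ha]
      rw [Complex.sub_conj]
      field_simp
      ring_nf
      simp [Complex.ext_iff]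
      ring
    -- bounds on |a.re|, |a.im|
    have hBle1 : |a.re| ≤ ‖B x‖ := by
      have := norm_inner_le_norm (𝕜 := ℂ) (B x) x
      rw [hBx] at this
      simpa [hx] using this
    have hBle2 : |a.re| ≤ ‖B‖ := by
      refine hBle1.trans ?_
      calc ‖B x‖ ≤ ‖B‖ * ‖x‖ := B.le_opNorm x
        _ = ‖B‖ := by rw [hx, mul_one]
    have hCle1 : |a.im| ≤ ‖C x‖ := by
      have := norm_inner_le_norm (𝕜 := ℂ) (C x) x
      rw [hCx] at this
      simpa [hx] using this
    have hCle2 : |a.im| ≤ ‖C‖ := by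
      refine hCle1.trans ?_
      calc ‖C x‖ ≤ ‖C‖ * ‖x‖ := C.le_opNorm x
        _ = ‖C‖ := by rw [hx, mul_one]
    -- norms of B x, C x
    have hnBx : ‖B x‖ = 2⁻¹ * ‖T x + adjoint T x‖ := by
      have hb : B x = (2 : ℂ)⁻¹ • (T x + adjoint T x) := by simp [hBdef, smul_add]
      rw [hb, norm_smul]; simp
    have hnCx : ‖C x‖ = 2⁻¹ * ‖T x - adjoint T x‖ := by
      have hc : C x = (2 * Complex.I)⁻¹ • (T x - adjoint T x) := by simp [hCdef, smul_sub]
      rw [hc, norm_smul]; simp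
    -- parallelogram
    have hpar : ‖T x + adjoint T x‖ ^ 2 + ‖T x - adjoint T x‖ ^ 2
        = 2 * (‖T x‖ ^ 2 + ‖adjoint T x‖ ^ 2) := by
      have := parallelogram_law_with_norm ℂ (T x) (adjoint T x)
      ring_nf
      ring_nf at this
      linarith [this]
    -- bound on ‖Tx‖² + ‖T*x‖²
    have hsum : ‖T x‖ ^ 2 + ‖adjoint T x‖ ^ 2 ≤ ‖adjoint T * T + T * adjoint T‖ := by
      have h1 : (inner ℂ ((adjoint T * T + T * adjoint T) x) x : ℂ)
          = ((‖T x‖ ^ 2 + ‖adjoint T x‖ ^ 2 : ℝ) : ℂ) := by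
        rw [add_apply, ContinuousLinearMap.mul_apply, ContinuousLinearMap.mul_apply, inner_add_left, adjoint_inner_left]
        have : (inner ℂ (T ((adjoint T) x)) x : ℂ) = inner ℂ ((adjoint T) x) ((adjoint T) x) := by
          nth_rewrite 1 [← adjoint_adjoint T]
          rw [adjoint_inner_left]
        rw [this, inner_self_eq_norm_sq_to_K, inner_self_eq_norm_sq_to_K]
        norm_cast
      have h2 := norm_inner_le_norm (𝕜 := ℂ) ((adjoint T * T + T * adjoint T) x) x
      rw [h1] at h2
      have h3 : ‖((‖T x‖ ^ 2 + ‖adjoint T x‖ ^ 2 : ℝ) : ℂ)‖ = ‖T x‖ ^ 2 + ‖adjoint T x‖ ^ 2 := by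
        rw [Complex.norm_real, Real.norm_of_nonneg (by positivity)]
      rw [h3, hx, mul_one] at h2
      exact h2.trans (((adjoint T * T + T * adjoint T)).le_opNorm x |>.trans (by rw [hx, mul_one]))
    -- combine
    have habs : ‖a‖ ^ 2 = a.re ^ 2 + a.im ^ 2 := by
      rw [Complex.sq_norm, Complex.normSq_apply]; ring
    have hre : a.re ^ 2 ≤ (‖B x‖ ^ 2 + ‖B‖ ^ 2) / 2 := by
      have h := mul_le_mul hBle1 hBle2 (abs_nonneg _) (norm_nonneg _)
      nlinarith [sq_nonneg (‖B x‖ - ‖B‖), sq_abs a.re]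
    have him : a.im ^ 2 ≤ (‖C x‖ ^ 2 + ‖C‖ ^ 2) / 2 := by
      have h := mul_le_mul hCle1 hCle2 (abs_nonneg _) (norm_nonneg _)
      nlinarith [sq_nonneg (‖C x‖ - ‖C‖), sq_abs a.im]
    have hBCx : ‖B x‖ ^ 2 + ‖C x‖ ^ 2 ≤ 2⁻¹ * ‖adjoint T * T + T * adjoint T‖ := by
      rw [hnBx, hnCx]
      nlinarith [hpar, hsum]
    rw [hRdef, habs]
    linarith [hre, him, hBCx]
  have h2 : 0 ≤ nr T := by
    apply Real.sSup_nonneg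
    rintro r ⟨x, hx, rfl⟩
    positivity
  have h1 : nr T ≤ Real.sqrt R := by
    apply Real.sSup_le
    · rintro r ⟨x, hx, rfl⟩
      have hk := key x hx
      exact (Real.le_sqrt (norm_nonneg _) hR0).mpr hk
    · exact Real.sqrt_nonneg _
  calc nr T ^ 2 ≤ Real.sqrt R ^ 2 := by
        exact pow_le_pow_left₀ h2 h1 2
    _ = R := Real.sq_sqrt hR0
end

section
/- For a bounded linear operator T on a complex Hilbert space H, w(T)² ≤ (1/4)·‖T*T + TT*‖ + (1/4)·(‖Re(T)+Im(T)‖² + ‖Re(T)−Im(T)‖²). -/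
open ContinuousLinearMap

set_option maxHeartbeats 1000000

lemma key_stmt_11 {H : Type*} [NormedAddCommGroup H] [InnerProductSpace ℂ H] [CompleteSpace H]
    (T : H →L[ℂ] H) (x : H) (hx : ‖x‖ = 1) :
    ‖(inner ℂ (T x) x : ℂ)‖ ^ 2 ≤
      (1 / 4) * ‖adjoint T * T + T * adjoint T‖
      + (1 / 4) * (‖(2 : ℂ)⁻¹ • (T + adjoint T) + (2 * Complex.I)⁻¹ • (T - adjoint T)‖ ^ 2
                   + ‖(2 : ℂ)⁻¹ • (T + adjoint T) - (2 * Complex.I)⁻¹ • (T - adjoint T)‖ ^ 2) := by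
  set A : H →L[ℂ] H := (2 : ℂ)⁻¹ • (T + adjoint T) with hA
  set B : H →L[ℂ] H := (2 * Complex.I)⁻¹ • (T - adjoint T) with hB
  set z : ℂ := inner ℂ (T x) x with hz
  have hconj : (inner ℂ (adjoint T x) x : ℂ) = starRingEnd ℂ z := by
    rw [adjoint_inner_left, ← inner_conj_symm]
  have hAz : (inner ℂ (A x) x : ℂ) = (z.re : ℂ) := by
    simp only [hA, ContinuousLinearMap.smul_apply, ContinuousLinearMap.add_apply,
      inner_smul_left, inner_add_left, hconj, ← hz]
    simp [Complex.ext_iff]; ring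
  have hBz : (inner ℂ (B x) x : ℂ) = (-z.im : ℂ) := by
    simp only [hB, ContinuousLinearMap.smul_apply, ContinuousLinearMap.sub_apply,
      inner_smul_left, inner_sub_left, hconj, ← hz]
    simp [Complex.ext_iff]; ring
  -- |re z| ≤ ‖A x‖, |im z| ≤ ‖B x‖
  have h1 : |z.re| ≤ ‖A x‖ := by
    have := norm_inner_le_norm (𝕜 := ℂ) (A x) x
    rw [hAz, hx] at this; simpa using this
  have h2 : |z.im| ≤ ‖B x‖ := by
    have := norm_inner_le_norm (𝕜 := ℂ) (B x) x
    rw [hBz, hx] at this; simpa using this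
  have step1 : ‖z‖ ^ 2 ≤ ‖A x‖ ^ 2 + ‖B x‖ ^ 2 := by
    have : ‖z‖ ^ 2 = z.re ^ 2 + z.im ^ 2 := by
      rw [Complex.sq_norm, Complex.normSq_apply]; ring
    rw [this]
    have e1 : z.re ^ 2 ≤ ‖A x‖ ^ 2 := by
      rw [← sq_abs]; exact pow_le_pow_left₀ (abs_nonneg _) h1 2
    have e2 : z.im ^ 2 ≤ ‖B x‖ ^ 2 := by
      rw [← sq_abs]; exact pow_le_pow_left₀ (abs_nonneg _) h2 2
    linarith
  -- norms of A x, B x in terms of T x, T* x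
  have hnA : ‖A x‖ = 2⁻¹ * ‖T x + adjoint T x‖ := by
    rw [hA, ContinuousLinearMap.smul_apply, ContinuousLinearMap.add_apply, norm_smul]
    norm_num
  have hnB : ‖B x‖ = 2⁻¹ * ‖T x - adjoint T x‖ := by
    rw [hB, ContinuousLinearMap.smul_apply, ContinuousLinearMap.sub_apply, norm_smul]
    simp
  have hp := parallelogram_law_with_norm ℂ (T x) (adjoint T x)
  have hsum : ‖A x‖ ^ 2 + ‖B x‖ ^ 2 = 2⁻¹ * (‖T x‖ ^ 2 + ‖adjoint T x‖ ^ 2) := by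
    rw [hnA, hnB]
    nlinarith [hp]
  -- first half bound
  have hTx : (inner ℂ ((adjoint T * T + T * adjoint T) x) x : ℂ).re
      = ‖T x‖ ^ 2 + ‖adjoint T x‖ ^ 2 := by
    have e1 : (inner ℂ ((adjoint T) (T x)) x : ℂ) = inner ℂ (T x) (T x) := adjoint_inner_left _ _ _
    have e2 : (inner ℂ (T ((adjoint T) x)) x : ℂ) = inner ℂ ((adjoint T) x) ((adjoint T) x) := by
      rw [← adjoint_inner_right]
    simp only [ContinuousLinearMap.add_apply, ContinuousLinearMap.mul_apply, inner_add_left,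
      e1, e2, Complex.add_re]
    rw [inner_self_eq_norm_sq_to_K (𝕜 := ℂ), inner_self_eq_norm_sq_to_K (𝕜 := ℂ)]
    simp [← Complex.ofReal_pow]
  have hhalf : ‖T x‖ ^ 2 + ‖adjoint T x‖ ^ 2 ≤ ‖adjoint T * T + T * adjoint T‖ := by
    rw [← hTx]
    calc (inner ℂ ((adjoint T * T + T * adjoint T) x) x : ℂ).re
        ≤ ‖(inner ℂ ((adjoint T * T + T * adjoint T) x) x : ℂ)‖ := Complex.re_le_norm _
      _ ≤ ‖(adjoint T * T + T * adjoint T) x‖ * ‖x‖ := norm_inner_le_norm _ _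
      _ ≤ ‖adjoint T * T + T * adjoint T‖ * ‖x‖ * ‖x‖ := by
          gcongr; exact le_opNorm _ _
      _ = ‖adjoint T * T + T * adjoint T‖ := by rw [hx]; ring
  -- second half bound via parallelogram on A x, B x
  have hp2 := parallelogram_law_with_norm ℂ (A x) (B x)
  have hABn1 : ‖A x + B x‖ ≤ ‖A + B‖ := by
    have := le_opNorm (A + B) x
    simpa [hx] using this
  have hABn2 : ‖A x - B x‖ ≤ ‖A - B‖ := by
    have := le_opNorm (A - B) x
    simpa [hx] using this
  have hq1 : ‖A x + B x‖ ^ 2 ≤ ‖A + B‖ ^ 2 :=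
    pow_le_pow_left₀ (norm_nonneg _) hABn1 2
  have hq2 : ‖A x - B x‖ ^ 2 ≤ ‖A - B‖ ^ 2 :=
    pow_le_pow_left₀ (norm_nonneg _) hABn2 2
  linarith [hp2, hsum, step1, hhalf, hq1, hq2]

theorem stmt_11 {H : Type*} [NormedAddCommGroup H] [InnerProductSpace ℂ H] [CompleteSpace H]
    (T : H →L[ℂ] H) :
    nr T ^ 2 ≤ (1 / 4) * ‖adjoint T * T + T * adjoint T‖
      + (1 / 4) * (‖(2 : ℂ)⁻¹ • (T + adjoint T) + (2 * Complex.I)⁻¹ • (T - adjoint T)‖ ^ 2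
                   + ‖(2 : ℂ)⁻¹ • (T + adjoint T) - (2 * Complex.I)⁻¹ • (T - adjoint T)‖ ^ 2) := by
  set R : ℝ := (1 / 4) * ‖adjoint T * T + T * adjoint T‖
      + (1 / 4) * (‖(2 : ℂ)⁻¹ • (T + adjoint T) + (2 * Complex.I)⁻¹ • (T - adjoint T)‖ ^ 2
                   + ‖(2 : ℂ)⁻¹ • (T + adjoint T) - (2 * Complex.I)⁻¹ • (T - adjoint T)‖ ^ 2)
    with hRdef
  have hR : 0 ≤ R := by rw [hRdef]; positivity
  have h1 : nr T ≤ Real.sqrt R := by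
    apply Real.sSup_le _ (Real.sqrt_nonneg _)
    rintro r ⟨x, hx, rfl⟩
    rw [← Real.sqrt_sq (norm_nonneg _)]
    exact Real.sqrt_le_sqrt (key_stmt_11 T x hx)
  have h0 : 0 ≤ nr T := by
    apply Real.sSup_nonneg
    rintro r ⟨x, hx, rfl⟩
    exact norm_nonneg _
  calc nr T ^ 2 ≤ Real.sqrt R ^ 2 := pow_le_pow_left₀ h0 h1 2
    _ = R := Real.sq_sqrt hR
end

section
/- For bounded linear operators B and C on a complex Hilbert space H, w_e(B,C)² ≤ (1/2)·‖B*B + C*C + BB* + CC*‖. -/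
open ContinuousLinearMap

lemma abs_inner_le_adj {H : Type*} [NormedAddCommGroup H] [InnerProductSpace ℂ H]
    [CompleteSpace H] (B : H →L[ℂ] H) (x : H) (hx : ‖x‖ = 1) :
    ‖(inner ℂ (B x) x : ℂ)‖ ≤ ‖adjoint B x‖ := by
  have h : (inner ℂ (B x) x : ℂ) = starRingEnd ℂ (inner ℂ (adjoint B x) x : ℂ) := by
    rw [adjoint_inner_left, inner_conj_symm]
  rw [h, Complex.norm_conj]
  simpa [hx] using norm_inner_le_norm (𝕜 := ℂ) (adjoint B x) x

theorem stmt_12 {H : Type*} [NormedAddCommGroup H] [InnerProductSpace ℂ H] [CompleteSpace H]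
    (B C : H →L[ℂ] H) :
    (er B C) ^ 2 ≤ (1 / 2) * ‖adjoint B * B + adjoint C * C + B * adjoint B + C * adjoint C‖ := by
  set S := adjoint B * B + adjoint C * C + B * adjoint B + C * adjoint C with hS
  have hSnorm : (0:ℝ) ≤ (1/2) * ‖S‖ := by positivity
  have key : ∀ x : H, ‖x‖ = 1 →
      ‖(inner ℂ (B x) x : ℂ)‖ ^ 2 + ‖(inner ℂ (C x) x : ℂ)‖ ^ 2
        ≤ (1/2) * ‖S‖ := by
    intro x hx
    have hB1 : ‖(inner ℂ (B x) x : ℂ)‖ ≤ ‖B x‖ := by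
      simpa [hx] using norm_inner_le_norm (𝕜 := ℂ) (B x) x
    have hC1 : ‖(inner ℂ (C x) x : ℂ)‖ ≤ ‖C x‖ := by
      simpa [hx] using norm_inner_le_norm (𝕜 := ℂ) (C x) x
    have hB2 := abs_inner_le_adj B x hx
    have hC2 := abs_inner_le_adj C x hx
    have habs : ∀ T : H →L[ℂ] H, (0:ℝ) ≤ ‖(inner ℂ (T x) x : ℂ)‖ :=
      fun T => norm_nonneg _
    have hBsq : ‖(inner ℂ (B x) x : ℂ)‖ ^ 2 ≤ (‖B x‖^2 + ‖adjoint B x‖^2)/2 := by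
      nlinarith [habs B, norm_nonneg (B x), norm_nonneg (adjoint B x),
        sq_nonneg (‖B x‖ - ‖adjoint B x‖)]
    have hCsq : ‖(inner ℂ (C x) x : ℂ)‖ ^ 2 ≤ (‖C x‖^2 + ‖adjoint C x‖^2)/2 := by
      nlinarith [habs C, norm_nonneg (C x), norm_nonneg (adjoint C x),
        sq_nonneg (‖C x‖ - ‖adjoint C x‖)]
    have hinner : (inner ℂ (S x) x : ℂ) =
        (‖B x‖^2 + ‖C x‖^2 + ‖adjoint B x‖^2 + ‖adjoint C x‖^2 : ℝ) := by
      have hT : ∀ T : H →L[ℂ] H, (inner ℂ (T ((adjoint T) x)) x : ℂ)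
          = ((‖adjoint T x‖ : ℂ))^2 := by
        intro T
        rw [← adjoint_inner_right, inner_self_eq_norm_sq_to_K]
        norm_cast
      simp only [hS, add_apply, mul_apply_eq_comp, inner_add_left, adjoint_inner_left,
        inner_self_eq_norm_sq_to_K, hT]
      norm_cast
      ring_nf
      push_cast
      simp only [RCLike.ofReal_alg, Complex.real_smul, mul_one]
    have hre : ‖B x‖^2 + ‖C x‖^2 + ‖adjoint B x‖^2 + ‖adjoint C x‖^2 ≤ ‖S‖ := by
      have h1 : ‖(inner ℂ (S x) x : ℂ)‖ ≤ ‖S‖ := by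
        calc ‖(inner ℂ (S x) x : ℂ)‖ ≤ ‖S x‖ * ‖x‖ := by
              simpa using norm_inner_le_norm (𝕜 := ℂ) (S x) x
          _ ≤ ‖S‖ * ‖x‖ * ‖x‖ := by
              have := (S).le_opNorm x
              nlinarith [norm_nonneg x]
          _ = ‖S‖ := by rw [hx]; ring
      have h2 : (‖B x‖^2 + ‖C x‖^2 + ‖adjoint B x‖^2 + ‖adjoint C x‖^2 : ℝ)
          = (inner ℂ (S x) x : ℂ).re := by rw [hinner, Complex.ofReal_re]
      calc ‖B x‖^2 + ‖C x‖^2 + ‖adjoint B x‖^2 + ‖adjoint C x‖^2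
          = (inner ℂ (S x) x : ℂ).re := h2
        _ ≤ ‖(inner ℂ (S x) x : ℂ)‖ := Complex.re_le_norm _
        _ ≤ ‖S‖ := h1
    linarith
  have hub : er B C ≤ Real.sqrt ((1/2) * ‖S‖) := by
    apply Real.sSup_le
    · rintro r ⟨x, hx, rfl⟩
      exact Real.sqrt_le_sqrt (key x hx)
    · exact Real.sqrt_nonneg _
  have hnn : 0 ≤ er B C := by
    apply Real.sSup_nonneg
    rintro r ⟨x, hx, rfl⟩
    exact Real.sqrt_nonneg _
  calc (er B C)^2 ≤ (Real.sqrt ((1/2) * ‖S‖))^2 := by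
        apply pow_le_pow_left₀ hnn hub
    _ = (1/2) * ‖S‖ := Real.sq_sqrt hSnorm
end

section
/- For bounded linear operators B and C on a complex Hilbert space H and 1 ≤ r ≤ 2, w_e(B,C)^{2r} ≤ (1/2)·‖(B*B + C*C)^r + (BB* + CC*)^r‖. -/
open ContinuousLinearMap

noncomputable def opow {E : Type*} [NormedAddCommGroup E] [InnerProductSpace ℂ E]
    [CompleteSpace E] (A : E →L[ℂ] E) (r : ℝ) : E →L[ℂ] E :=
  cfc (fun x : ℝ => x ^ r) A

lemma tangentpos {r : ℝ} (hr : 1 ≤ r) {a t : ℝ} (ha : 0 < a) (ht : 0 ≤ t) :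
    (a ^ r - r * a ^ (r - 1) * a) + (r * a ^ (r - 1)) * t ≤ t ^ r := by
  have hs : -1 ≤ t / a - 1 := by
    have : 0 ≤ t / a := div_nonneg ht ha.le
    linarith
  have hb := one_add_mul_self_le_rpow_one_add hs hr
  have h1 : (1 + (t / a - 1)) = t / a := by ring
  rw [h1, Real.div_rpow ht ha.le] at hb
  have har : (0:ℝ) < a ^ r := Real.rpow_pos_of_pos ha r
  have key : a ^ r * (1 + r * (t / a - 1)) ≤ t ^ r := by
    calc a ^ r * (1 + r * (t / a - 1)) ≤ a ^ r * (t ^ r / a ^ r) :=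
          mul_le_mul_of_nonneg_left hb har.le
      _ = t ^ r := by field_simp
  have hsub : a ^ (r - 1) = a ^ r / a := by
    rw [Real.rpow_sub ha, Real.rpow_one]
  calc (a ^ r - r * a ^ (r - 1) * a) + (r * a ^ (r - 1)) * t
      = a ^ r * (1 + r * (t / a - 1)) := by rw [hsub]; field_simp; ring
    _ ≤ t ^ r := key

lemma tangent_line {r : ℝ} (hr : 1 ≤ r) {a t : ℝ} (ha : 0 ≤ a) (ht : 0 ≤ t) :
    (a ^ r - r * a ^ (r - 1) * a) + (r * a ^ (r - 1)) * t ≤ t ^ r := by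
  rcases eq_or_lt_of_le ha with h0 | hapos
  · rw [← h0]
    rcases eq_or_lt_of_le hr with h1 | h1
    · rw [← h1]; norm_num [Real.rpow_one]
    · rw [Real.zero_rpow (by positivity),
        Real.zero_rpow (by intro h; rw [sub_eq_zero] at h; exact h1.ne' h)]
      simpa using Real.rpow_nonneg ht r
  · exact tangentpos hr hapos ht

lemma mccarthy {H : Type*} [NormedAddCommGroup H] [InnerProductSpace ℂ H] [CompleteSpace H]
    {P : H →L[ℂ] H} (hP : 0 ≤ P) {r : ℝ} (hr : 1 ≤ r) {x : H} (hx : ‖x‖ = 1) :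
    (Complex.re (inner ℂ (P x) x : ℂ)) ^ r ≤ Complex.re (inner ℂ (opow P r x) x : ℂ) := by
  have hPpos := (nonneg_iff_isPositive P).mp hP
  have hSA : IsSelfAdjoint P := hPpos.isSelfAdjoint
  set a := Complex.re (inner ℂ (P x) x : ℂ) with ha_def
  have ha : 0 ≤ a := hPpos.re_inner_nonneg_left x
  set c₁ := a ^ r - r * a ^ (r - 1) * a with hc₁
  set c₂ := r * a ^ (r - 1) with hc₂
  have hcontf : Continuous fun t : ℝ => t ^ r := Real.continuous_rpow_const (by linarith)
  have hmono : cfc (fun t : ℝ => c₁ + c₂ * t) P ≤ cfc (fun t : ℝ => t ^ r) P := by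
    exact cfc_mono (fun t ht => tangent_line hr ha (spectrum_nonneg_of_nonneg hP ht))
      ((continuous_const.add (continuous_const.mul continuous_id)).continuousOn)
      hcontf.continuousOn
  have haff : cfc (fun t : ℝ => c₁ + c₂ * t) P = algebraMap ℝ (H →L[ℂ] H) c₁ + c₂ • P := by
    rw [cfc_add P (fun _ => c₁) (fun t => c₂ * t) continuous_const.continuousOn
        ((continuous_const.mul continuous_id).continuousOn),
      cfc_const c₁ P hSA, cfc_const_mul c₂ (fun t : ℝ => t) P continuous_id.continuousOn,
      cfc_id' ℝ P]
  rw [haff] at hmono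
  have hdiff := ((nonneg_iff_isPositive _).mp (sub_nonneg.mpr hmono)).re_inner_nonneg_left x
  have hexp : Complex.re (inner ℂ ((algebraMap ℝ (H →L[ℂ] H) c₁ + c₂ • P) x) x : ℂ)
      = c₁ + c₂ * a := by
    have e1 : c₁ • x = ((c₁ : ℂ)) • x := (algebraMap_smul ℂ c₁ x).symm
    have e2 : c₂ • P x = ((c₂ : ℂ)) • P x := (algebraMap_smul ℂ c₂ (P x)).symm
    simp only [ContinuousLinearMap.add_apply, ContinuousLinearMap.smul_apply,
      Algebra.algebraMap_eq_smul_one, ContinuousLinearMap.one_apply, inner_add_left,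
      Complex.add_re, e1, e2, inner_smul_left, Complex.mul_re, Complex.conj_re, Complex.conj_im,
      Complex.ofReal_re, Complex.ofReal_im, inner_self_eq_norm_sq_to_K (𝕜 := ℂ)]
    simp [hx, ha_def]
  have hfinal : Complex.re (inner ℂ ((cfc (fun t : ℝ => t ^ r) P) x) x : ℂ)
      ≥ c₁ + c₂ * a := by
    rw [← hexp]
    have h0 : Complex.re (inner ℂ (((cfc (fun t : ℝ => t ^ r) P)
        - (algebraMap ℝ (H →L[ℂ] H) c₁ + c₂ • P)) x) x : ℂ) ≥ 0 := hdiff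
    rw [ContinuousLinearMap.sub_apply, inner_sub_left, Complex.sub_re] at h0
    linarith
  have hca : c₁ + c₂ * a = a ^ r := by rw [hc₁, hc₂]; ring
  rw [hca] at hfinal
  exact hfinal

set_option maxHeartbeats 1000000 in
theorem stmt_13 {H : Type*} [NormedAddCommGroup H] [InnerProductSpace ℂ H] [CompleteSpace H]
    (B C : H →L[ℂ] H) (r : ℝ) (hr : 1 ≤ r) (hr2 : r ≤ 2) :
    (er B C) ^ (2 * r)
      ≤ (1 / 2) * ‖opow (adjoint B * B + adjoint C * C) r
                   + opow (B * adjoint B + C * adjoint C) r‖ := by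
  have hr0 : (0:ℝ) < r := by linarith
  have hrne : r ≠ 0 := ne_of_gt hr0
  set P := adjoint B * B + adjoint C * C with hPdef
  set Q := B * adjoint B + C * adjoint C with hQdef
  have hP : (0 : H →L[ℂ] H) ≤ P := by
    apply add_nonneg
    · rw [← star_eq_adjoint]; exact star_mul_self_nonneg B
    · rw [← star_eq_adjoint]; exact star_mul_self_nonneg C
  have hQ : (0 : H →L[ℂ] H) ≤ Q := by
    apply add_nonneg
    · rw [← star_eq_adjoint]; exact mul_star_self_nonneg B
    · rw [← star_eq_adjoint]; exact mul_star_self_nonneg C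
  set K := (1/2 : ℝ) * ‖opow P r + opow Q r‖ with hKdef
  have hK0 : 0 ≤ K := by positivity
  have key : ∀ x : H, ‖x‖ = 1 →
      (‖(inner ℂ (B x) x : ℂ)‖ ^ 2 + ‖(inner ℂ (C x) x : ℂ)‖ ^ 2) ^ r ≤ K := by
    intro x hx
    set b := ‖(inner ℂ (B x) x : ℂ)‖ with hbdef
    set c := ‖(inner ℂ (C x) x : ℂ)‖ with hcdef
    have hb0 : 0 ≤ b := norm_nonneg _
    have hc0 : 0 ≤ c := norm_nonneg _
    have habs : ∀ T : H →L[ℂ] H, ‖(inner ℂ (T x) x : ℂ)‖ ≤ ‖T x‖ := by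
      intro T
      calc ‖(inner ℂ (T x) x : ℂ)‖ = ‖(inner ℂ (T x) x : ℂ)‖ := rfl
        _ ≤ ‖T x‖ * ‖x‖ := norm_inner_le_norm _ _
        _ = ‖T x‖ := by rw [hx, mul_one]
    have habs' : ∀ T : H →L[ℂ] H, ‖(inner ℂ (T x) x : ℂ)‖ ≤ ‖adjoint T x‖ := by
      intro T
      calc ‖(inner ℂ (T x) x : ℂ)‖ = ‖(inner ℂ (T x) x : ℂ)‖ := rfl
        _ = ‖(starRingEnd ℂ) (inner ℂ x (T x) : ℂ)‖ := by rw [inner_conj_symm]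
        _ = ‖(inner ℂ x (T x) : ℂ)‖ := RCLike.norm_conj _
        _ = ‖(inner ℂ (adjoint T x) x : ℂ)‖ := by rw [adjoint_inner_left]
        _ ≤ ‖adjoint T x‖ * ‖x‖ := norm_inner_le_norm _ _
        _ = ‖adjoint T x‖ := by rw [hx, mul_one]
    have hbsq : b ^ 2 ≤ (‖B x‖ ^ 2 + ‖adjoint B x‖ ^ 2) / 2 := by
      nlinarith [habs B, habs' B, sq_nonneg (‖B x‖ - ‖adjoint B x‖)]
    have hcsq : c ^ 2 ≤ (‖C x‖ ^ 2 + ‖adjoint C x‖ ^ 2) / 2 := by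
      nlinarith [habs C, habs' C, sq_nonneg (‖C x‖ - ‖adjoint C x‖)]
    set p := ‖B x‖ ^ 2 + ‖C x‖ ^ 2 with hpdef
    set q := ‖adjoint B x‖ ^ 2 + ‖adjoint C x‖ ^ 2 with hqdef
    have hp0 : 0 ≤ p := by positivity
    have hq0 : 0 ≤ q := by positivity
    have hpP : (Complex.re (inner ℂ (P x) x : ℂ)) = p := by
      simp [hPdef, ContinuousLinearMap.add_apply, ContinuousLinearMap.mul_apply,
        inner_add_left, adjoint_inner_left, inner_self_eq_norm_sq_to_K (𝕜 := ℂ),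
        ← Complex.ofReal_pow, Complex.ofReal_re, hpdef]
    have hqQ : (Complex.re (inner ℂ (Q x) x : ℂ)) = q := by
      have e1 : (inner ℂ (B (adjoint B x)) x : ℂ) = inner ℂ (adjoint B x) (adjoint B x) := by
        rw [← adjoint_inner_right]
      have e2 : (inner ℂ (C (adjoint C x)) x : ℂ) = inner ℂ (adjoint C x) (adjoint C x) := by
        rw [← adjoint_inner_right]
      simp [hQdef, ContinuousLinearMap.add_apply, ContinuousLinearMap.mul_apply,
        inner_add_left, e1, e2, inner_self_eq_norm_sq_to_K (𝕜 := ℂ),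
        ← Complex.ofReal_pow, Complex.ofReal_re, hqdef]
    have step1 : b ^ 2 + c ^ 2 ≤ (p + q) / 2 := by
      rw [hpdef, hqdef]; linarith
    have step2 : ((p + q) / 2) ^ r ≤ (p ^ r + q ^ r) / 2 := by
      have h := (convexOn_rpow hr).2 (Set.mem_Ici.mpr hp0) (Set.mem_Ici.mpr hq0)
        (by norm_num : (0:ℝ) ≤ 1/2) (by norm_num : (0:ℝ) ≤ 1/2) (by norm_num)
      simp only [smul_eq_mul] at h
      calc ((p + q) / 2) ^ r = (1/2 * p + 1/2 * q) ^ r := by ring_nf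
        _ ≤ 1/2 * p ^ r + 1/2 * q ^ r := h
        _ = (p ^ r + q ^ r) / 2 := by ring
    have hmp := mccarthy hP hr hx
    rw [hpP] at hmp
    have hmq := mccarthy hQ hr hx
    rw [hqQ] at hmq
    have hnorm : Complex.re (inner ℂ (opow P r x) x : ℂ) + Complex.re (inner ℂ (opow Q r x) x : ℂ)
        ≤ ‖opow P r + opow Q r‖ := by
      have h1 : Complex.re (inner ℂ ((opow P r + opow Q r) x) x : ℂ)
          ≤ ‖opow P r + opow Q r‖ := by
        calc Complex.re (inner ℂ ((opow P r + opow Q r) x) x : ℂ)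
            ≤ ‖(inner ℂ ((opow P r + opow Q r) x) x : ℂ)‖ := Complex.re_le_norm _
          _ ≤ ‖(opow P r + opow Q r) x‖ * ‖x‖ := norm_inner_le_norm _ _
          _ ≤ (‖opow P r + opow Q r‖ * ‖x‖) * ‖x‖ := by
              gcongr; exact le_opNorm _ x
          _ = ‖opow P r + opow Q r‖ := by rw [hx]; ring
      rw [ContinuousLinearMap.add_apply, inner_add_left, Complex.add_re] at h1
      exact h1
    calc (b ^ 2 + c ^ 2) ^ r ≤ ((p + q) / 2) ^ r :=
          Real.rpow_le_rpow (by positivity) step1 hr0.le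
      _ ≤ (p ^ r + q ^ r) / 2 := step2
      _ ≤ (Complex.re (inner ℂ (opow P r x) x : ℂ)
            + Complex.re (inner ℂ (opow Q r x) x : ℂ)) / 2 := by linarith
      _ ≤ K := by rw [hKdef]; linarith
  have h2r : (0:ℝ) < 2 * r := by linarith
  have hersup : er B C ≤ K ^ (1/(2*r)) := by
    apply Real.sSup_le
    · rintro s ⟨x, hx, rfl⟩
      have hs0 : (0:ℝ) ≤ ‖(inner ℂ (B x) x : ℂ)‖ ^ 2
          + ‖(inner ℂ (C x) x : ℂ)‖ ^ 2 := by positivity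
      calc Real.sqrt (‖(inner ℂ (B x) x : ℂ)‖ ^ 2 + ‖(inner ℂ (C x) x : ℂ)‖ ^ 2)
          = (‖(inner ℂ (B x) x : ℂ)‖ ^ 2
              + ‖(inner ℂ (C x) x : ℂ)‖ ^ 2) ^ (1/2 : ℝ) := Real.sqrt_eq_rpow _
        _ = ((‖(inner ℂ (B x) x : ℂ)‖ ^ 2
              + ‖(inner ℂ (C x) x : ℂ)‖ ^ 2) ^ r) ^ (1/(2*r)) := by
            rw [← Real.rpow_mul hs0]
            congr 1
            field_simp
        _ ≤ K ^ (1/(2*r)) :=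
            Real.rpow_le_rpow (Real.rpow_nonneg hs0 r) (key x hx) (by positivity)
    · positivity
  have her0 : 0 ≤ er B C := by
    apply Real.sSup_nonneg
    rintro s ⟨x, hx, rfl⟩
    positivity
  calc er B C ^ (2*r) ≤ (K ^ (1/(2*r))) ^ (2*r) := Real.rpow_le_rpow her0 hersup h2r.le
    _ = K ^ ((1/(2*r)) * (2*r)) := (Real.rpow_mul hK0 _ _).symm
    _ = K := by
        rw [show (1/(2*r)) * (2*r) = 1 by field_simp]
        exact Real.rpow_one K
end

section
/- For a bounded linear operator T on a complex Hilbert space H, w(T) ≥ (1/4)·‖T‖ + (1/4)·(‖Re(T)‖ + ‖Im(T)‖) + (1/2)·|‖Re(T)‖ − ‖Im(T)‖|. -/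
open ContinuousLinearMap

lemma aux_quad {H : Type*} [NormedAddCommGroup H] [InnerProductSpace ℂ H]
    (B : H →L[ℂ] H) {M : ℝ}
    (h : ∀ x : H, ‖x‖ = 1 → ‖(inner ℂ (B x) x : ℂ)‖ ≤ M) (z : H) :
    ‖(inner ℂ (B z) z : ℂ)‖ ≤ M * ‖z‖ ^ 2 := by
  rcases eq_or_ne z 0 with rfl | hz
  · simp
  · have hz' : (0:ℝ) < ‖z‖ := norm_pos_iff.2 hz
    set c : ℂ := ((‖z‖⁻¹ : ℝ) : ℂ) with hc
    have hu : ‖c • z‖ = 1 := by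
      rw [norm_smul]
      simp [hc, abs_of_pos (inv_pos.2 hz'), inv_mul_cancel₀ hz'.ne']
    have h1 := h (c • z) hu
    have h2 : (inner ℂ (B (c • z)) (c • z) : ℂ) = (starRingEnd ℂ) c * (c * inner ℂ (B z) z) := by
      rw [map_smul, inner_smul_left, inner_smul_right]
    rw [h2] at h1
    have h3 : ‖((starRingEnd ℂ) c * (c * inner ℂ (B z) z))‖
        = ‖z‖⁻¹ * ‖z‖⁻¹ * ‖(inner ℂ (B z) z : ℂ)‖ := by
      simp [hc, map_mul, abs_of_pos (inv_pos.2 hz')]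
      ring
    rw [h3] at h1
    have := mul_le_mul_of_nonneg_left h1 (le_of_lt (mul_pos hz' hz'))
    calc ‖(inner ℂ (B z) z : ℂ)‖
        = ‖z‖ * ‖z‖ * (‖z‖⁻¹ * ‖z‖⁻¹ * ‖(inner ℂ (B z) z : ℂ)‖) := by
          field_simp
      _ ≤ ‖z‖ * ‖z‖ * M := by
          exact mul_le_mul_of_nonneg_left h1 (le_of_lt (mul_pos hz' hz'))
      _ = M * ‖z‖ ^ 2 := by ring

lemma aux_norm_le {H : Type*} [NormedAddCommGroup H] [InnerProductSpace ℂ H] [CompleteSpace H]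
    (B : H →L[ℂ] H) (hB : IsSelfAdjoint B) {M : ℝ} (hM : 0 ≤ M)
    (h : ∀ x : H, ‖x‖ = 1 → ‖(inner ℂ (B x) x : ℂ)‖ ≤ M) : ‖B‖ ≤ M := by
  have hq := aux_quad B h
  have key : ∀ x y : H, (inner ℂ (B x) y : ℂ).re ≤ M / 2 * (‖x‖ ^ 2 + ‖y‖ ^ 2) := by
    intro x y
    have e1 : (inner ℂ (B (x + y)) (x + y) : ℂ) - inner ℂ (B (x - y)) (x - y)
        = 2 * inner ℂ (B x) y + 2 * inner ℂ (B y) x := by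
      simp only [map_add, map_sub, inner_add_left, inner_add_right, inner_sub_left,
        inner_sub_right]
      ring
    have e2 : (inner ℂ (B y) x : ℂ).re = (inner ℂ (B x) y : ℂ).re := by
      have hsymm := hB.isSymmetric y x
      simp only [ContinuousLinearMap.coe_coe] at hsymm
      rw [hsymm]
      have := inner_re_symm (𝕜 := ℂ) y (B x)
      simpa using this
    have e3 : ((inner ℂ (B (x + y)) (x + y) : ℂ) - inner ℂ (B (x - y)) (x - y)).re
        = 4 * (inner ℂ (B x) y : ℂ).re := by
      rw [e1]
      simp [Complex.add_re, Complex.mul_re, e2]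
      ring
    have b1 : ((inner ℂ (B (x + y)) (x + y) : ℂ)).re ≤ M * ‖x + y‖ ^ 2 :=
      le_trans (Complex.re_le_norm _) (hq (x + y))
    have b2 : -((inner ℂ (B (x - y)) (x - y) : ℂ)).re ≤ M * ‖x - y‖ ^ 2 := by
      refine le_trans ?_ (hq (x - y))
      have := Complex.re_le_norm (-(inner ℂ (B (x - y)) (x - y) : ℂ))
      simpa only [Complex.neg_re, norm_neg] using this
    have par := parallelogram_law_with_norm ℂ x y
    have e4 : ((inner ℂ (B (x + y)) (x + y) : ℂ) - inner ℂ (B (x - y)) (x - y)).re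
        = ((inner ℂ (B (x + y)) (x + y) : ℂ)).re - ((inner ℂ (B (x - y)) (x - y) : ℂ)).re := by
      simp [Complex.sub_re]
    nlinarith [e3, e4, b1, b2, par]
  refine B.opNorm_le_bound hM ?_
  intro x
  rcases eq_or_ne (B x) 0 with h0 | h0
  · simp [h0]
    positivity
  · have hx : x ≠ 0 := by rintro rfl; simp at h0
    have hxn : (0:ℝ) < ‖x‖ := norm_pos_iff.2 hx
    have hBn : (0:ℝ) < ‖B x‖ := norm_pos_iff.2 h0
    set y : H := ((‖x‖ / ‖B x‖ : ℝ) : ℂ) • B x with hy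
    have hyn : ‖y‖ = ‖x‖ := by
      rw [hy, norm_smul]
      simp [abs_of_pos (div_pos hxn hBn)]
      field_simp
    have hre : (inner ℂ (B x) y : ℂ).re = ‖x‖ * ‖B x‖ := by
      rw [hy, inner_smul_right, inner_self_eq_norm_sq_to_K]
      simp [Complex.mul_re, ← Complex.ofReal_pow]
      field_simp
    have hk := key x y
    rw [hre, hyn] at hk
    nlinarith [hk, hxn, hBn]

theorem stmt_15 {H : Type*} [NormedAddCommGroup H] [InnerProductSpace ℂ H] [CompleteSpace H]
    (T : H →L[ℂ] H) :
    nr T ≥ (1 / 4) * ‖T‖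
      + (1 / 4) * (‖(2 : ℂ)⁻¹ • (T + adjoint T)‖ + ‖(2 * Complex.I)⁻¹ • (T - adjoint T)‖)
      + (1 / 2) * |‖(2 : ℂ)⁻¹ • (T + adjoint T)‖ - ‖(2 * Complex.I)⁻¹ • (T - adjoint T)‖| := by
  set B : H →L[ℂ] H := (2 : ℂ)⁻¹ • (T + adjoint T) with hBdef
  set C : H →L[ℂ] H := (2 * Complex.I)⁻¹ • (T - adjoint T) with hCdef
  -- inner products of B and C with x
  have hBx : ∀ x : H, (inner ℂ (B x) x : ℂ) = ((inner ℂ (T x) x : ℂ).re : ℂ) := by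
    intro x
    rw [hBdef]
    simp only [coe_smul', Pi.smul_apply, add_apply, inner_smul_left, inner_add_left,
      adjoint_inner_left]
    have h1 : (inner ℂ x (T x) : ℂ) = (starRingEnd ℂ) (inner ℂ (T x) x : ℂ) :=
      (inner_conj_symm x (T x)).symm
    rw [h1]
    have h2 : (starRingEnd ℂ) ((2:ℂ)⁻¹) = (2:ℂ)⁻¹ := by
      rw [map_inv₀, map_ofNat]
    rw [h2, Complex.add_conj]
    push_cast
    ring
  have hCx : ∀ x : H, (inner ℂ (C x) x : ℂ) = ((-(inner ℂ (T x) x : ℂ).im : ℝ) : ℂ) := by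
    intro x
    rw [hCdef]
    simp only [coe_smul', Pi.smul_apply, sub_apply, inner_smul_left, inner_sub_left,
      adjoint_inner_left]
    have h1 : (inner ℂ x (T x) : ℂ) = (starRingEnd ℂ) (inner ℂ (T x) x) :=
      (inner_conj_symm x (T x)).symm
    rw [h1, Complex.sub_conj]
    have h2 : (starRingEnd ℂ) ((2 * Complex.I)⁻¹) = -(2 * Complex.I)⁻¹ := by
      rw [map_inv₀, map_mul, map_ofNat, Complex.conj_I, mul_neg, inv_neg]
    rw [h2]
    have hI : (2 * Complex.I) ≠ 0 := by
      simp [Complex.I_ne_zero]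
    field_simp
    push_cast
    ring
  have hBsa : IsSelfAdjoint B := by
    have : star B = B := by
      rw [hBdef, star_smul, star_add, star_eq_adjoint, star_eq_adjoint, adjoint_adjoint]
      rw [show star ((2:ℂ)⁻¹) = (2:ℂ)⁻¹ from by
        rw [Complex.star_def, map_inv₀, map_ofNat]]
      rw [add_comm]
    exact this
  have hCsa : IsSelfAdjoint C := by
    have : star C = C := by
      rw [hCdef, star_smul, star_sub, star_eq_adjoint, star_eq_adjoint, adjoint_adjoint]
      rw [show star ((2 * Complex.I)⁻¹) = -(2 * Complex.I)⁻¹ from by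
        rw [Complex.star_def, map_inv₀, map_mul, map_ofNat, Complex.conj_I, mul_neg, inv_neg]]
      rw [neg_smul, ← smul_neg, neg_sub]
    exact this
  have hdecomp : T = B + Complex.I • C := by
    rw [hBdef, hCdef, smul_smul]
    have hsc : Complex.I * (2 * Complex.I)⁻¹ = (2:ℂ)⁻¹ := by
      rw [mul_inv, ← mul_assoc, mul_comm Complex.I, mul_assoc,
        mul_inv_cancel₀ Complex.I_ne_zero, mul_one]
    rw [hsc]
    module
  have hTle : ‖T‖ ≤ ‖B‖ + ‖C‖ := by
    calc ‖T‖ = ‖B + Complex.I • C‖ := by rw [← hdecomp]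
      _ ≤ ‖B‖ + ‖Complex.I • C‖ := norm_add_le _ _
      _ = ‖B‖ + ‖C‖ := by
          have hIC : ‖Complex.I • C‖ = ‖C‖ := by
            rw [norm_smul, Complex.norm_I, one_mul]
          rw [hIC]
  have hnrdef : nr T = sSup {r : ℝ | ∃ x : H, ‖x‖ = 1 ∧
      r = ‖(inner ℂ (T x) x : ℂ)‖} := rfl
  have hbdd : BddAbove {r : ℝ | ∃ x : H, ‖x‖ = 1 ∧
      r = ‖(inner ℂ (T x) x : ℂ)‖} := by
    refine ⟨‖T‖, ?_⟩
    rintro r ⟨x, hx, rfl⟩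
    calc ‖(inner ℂ (T x) x : ℂ)‖ = ‖(inner ℂ (T x) x : ℂ)‖ := rfl
      _ ≤ ‖T x‖ * ‖x‖ := norm_inner_le_norm _ _
      _ ≤ (‖T‖ * ‖x‖) * ‖x‖ := by
          have := T.le_opNorm x
          nlinarith [norm_nonneg x]
      _ = ‖T‖ := by rw [hx]; ring
  by_cases hex : ∃ x : H, ‖x‖ = 1
  · obtain ⟨x₀, hx₀⟩ := hex
    have hnr_ge : ∀ x : H, ‖x‖ = 1 → ‖(inner ℂ (T x) x : ℂ)‖ ≤ nr T := by
      intro x hx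
      rw [hnrdef]
      exact le_csSup hbdd ⟨x, hx, rfl⟩
    have hnr0 : 0 ≤ nr T :=
      le_trans (norm_nonneg _) (hnr_ge x₀ hx₀)
    have hBle : ‖B‖ ≤ nr T := by
      refine aux_norm_le B hBsa hnr0 (fun x hx => ?_)
      rw [hBx x]
      calc ‖(((inner ℂ (T x) x : ℂ).re : ℂ))‖
          = |(inner ℂ (T x) x : ℂ).re| := by rw [Complex.norm_real, Real.norm_eq_abs]
        _ ≤ ‖(inner ℂ (T x) x : ℂ)‖ := Complex.abs_re_le_norm _
        _ ≤ nr T := hnr_ge x hx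
    have hCle : ‖C‖ ≤ nr T := by
      refine aux_norm_le C hCsa hnr0 (fun x hx => ?_)
      rw [hCx x]
      calc ‖(((-(inner ℂ (T x) x : ℂ).im : ℝ) : ℂ))‖
          = |(-(inner ℂ (T x) x : ℂ).im : ℝ)| := by rw [Complex.norm_real, Real.norm_eq_abs]
        _ = |(inner ℂ (T x) x : ℂ).im| := abs_neg _
        _ ≤ ‖(inner ℂ (T x) x : ℂ)‖ := Complex.abs_im_le_norm _
        _ ≤ nr T := hnr_ge x hx
    rcases abs_cases (‖B‖ - ‖C‖) with ⟨h1, h2⟩ | ⟨h1, h2⟩ <;> rw [h1] <;>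
      linarith [hBle, hCle, hTle]
  · have hzero : ∀ x : H, x = 0 := by
      intro x
      by_contra hx
      exact hex ⟨((‖x‖⁻¹ : ℝ) : ℂ) • x, by
        rw [norm_smul]
        simp [abs_of_pos (inv_pos.2 (norm_pos_iff.2 hx)),
          inv_mul_cancel₀ (norm_pos_iff.2 hx).ne']⟩
    have hT0 : T = 0 := by
      ext x
      rw [hzero x]
      simp
    have hSempty : {r : ℝ | ∃ x : H, ‖x‖ = 1 ∧
        r = ‖(inner ℂ (T x) x : ℂ)‖} = (∅ : Set ℝ) := by
      ext r
      simp only [Set.mem_setOf_eq, Set.mem_empty_iff_false, iff_false]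
      rintro ⟨x, hx, -⟩
      exact hex ⟨x, hx⟩
    have hB0 : B = 0 := by
      rw [hBdef, hT0]
      simp
    have hC0 : C = 0 := by
      rw [hCdef, hT0]
      simp
    rw [hnrdef, hSempty, Real.sSup_empty, hT0, hB0, hC0]
    simp
end

section
/- Let X, Y be bounded linear operators on a complex Hilbert space H and let T be the 2×2 off-diagonal operator matrix on H ⊕ H with blocks (0, X; Y, 0). Then w(T) ≥ max{‖X‖/4, ‖Y‖/4} + (1/4)·(‖X+Y*‖/2 + ‖X−Y*‖/2) + (1/2)·|‖X+Y*‖/2 − ‖X−Y*‖/2|. -/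
open ContinuousLinearMap

private lemma nr_bddAbove {E : Type*} [NormedAddCommGroup E] [InnerProductSpace ℂ E]
    (T : E →L[ℂ] E) :
    BddAbove {r : ℝ | ∃ x : E, ‖x‖ = 1 ∧ r = ‖(inner ℂ (T x) x : ℂ)‖} := by
  refine ⟨‖T‖, ?_⟩
  rintro r ⟨x, hx, rfl⟩
  calc ‖(inner ℂ (T x) x : ℂ)‖ = ‖(inner ℂ (T x) x : ℂ)‖ := rfl
    _ ≤ ‖T x‖ * ‖x‖ := norm_inner_le_norm _ _
    _ ≤ ‖T‖ * ‖x‖ * ‖x‖ := by gcongr; exact T.le_opNorm x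
    _ = ‖T‖ := by rw [hx]; ring

private lemma nr_nonneg {E : Type*} [NormedAddCommGroup E] [InnerProductSpace ℂ E]
    (T : E →L[ℂ] E) : 0 ≤ nr T := by
  apply Real.sSup_nonneg
  rintro r ⟨x, hx, rfl⟩
  exact norm_nonneg _

private lemma conj_self_mul (z : ℂ) : starRingEnd ℂ z * z = ((‖z‖ : ℝ) : ℂ) ^ 2 := by
  rw [mul_comm, Complex.mul_conj, ← Complex.sq_norm]
  push_cast
  ring

section main

variable {H : Type*} [NormedAddCommGroup H] [InnerProductSpace ℂ H] [CompleteSpace H]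

private lemma key_le (X Y : H →L[ℂ] H) (T : WithLp 2 (H × H) →L[ℂ] WithLp 2 (H × H))
    (hT : ∀ x y : H, T ((WithLp.equiv 2 (H × H)).symm (x, y))
        = (WithLp.equiv 2 (H × H)).symm (X y, Y x))
    (u w : H) (hu : ‖u‖ = 1) (hw : ‖w‖ = 1) (c : ℂ) (hc : ‖c‖ = 1) :
    ‖(starRingEnd ℂ c * inner ℂ (X w) u + c * inner ℂ (Y u) w) / 2‖ ≤ nr T := by
  set s : ℂ := (((Real.sqrt 2)⁻¹ : ℝ) : ℂ) with hsdef
  have hs2 : s ^ 2 = (1/2 : ℂ) := by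
    have h : (Real.sqrt 2)⁻¹ * (Real.sqrt 2)⁻¹ = (1/2 : ℝ) := by
      rw [← mul_inv, Real.mul_self_sqrt (by norm_num)]
      norm_num
    rw [hsdef, sq, ← Complex.ofReal_mul, h]
    norm_num
  have hsnorm : ‖s‖ = (Real.sqrt 2)⁻¹ := by
    rw [hsdef, Complex.norm_real, Real.norm_eq_abs]
    exact abs_of_nonneg (inv_nonneg.2 (Real.sqrt_nonneg 2))
  set z : WithLp 2 (H × H) := (WithLp.equiv 2 (H × H)).symm (s • u, (s * c) • w) with hz
  have hznorm : ‖z‖ = 1 := by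
    rw [hz, WithLp.prod_norm_eq_of_L2]
    simp only [WithLp.equiv_symm_apply, WithLp.toLp_fst, WithLp.toLp_snd]
    rw [norm_smul, norm_smul, norm_mul, hsnorm, hu, hc, hw]
    simp only [mul_one]
    rw [show ((Real.sqrt 2)⁻¹ : ℝ) ^ 2 + ((Real.sqrt 2)⁻¹ : ℝ) ^ 2 = 1 by
      rw [← Real.sqrt_inv, Real.sq_sqrt (by norm_num)]; norm_num]
    exact Real.sqrt_one
  have hTz : (inner ℂ (T z) z : ℂ)
      = (starRingEnd ℂ c * inner ℂ (X w) u + c * inner ℂ (Y u) w) / 2 := by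
    rw [hz, hT]
    rw [WithLp.prod_inner_apply]
    simp only [WithLp.equiv_symm_apply, WithLp.ofLp_toLp]
    rw [map_smul, map_smul, inner_smul_left, inner_smul_right, inner_smul_left,
      inner_smul_right]
    have hsc : starRingEnd ℂ s = s := Complex.conj_ofReal _
    rw [map_mul, hsc]
    field_simp
    ring_nf
    rw [hs2]
    ring
  have hmem : ‖(starRingEnd ℂ c * inner ℂ (X w) u + c * inner ℂ (Y u) w) / 2‖
      ∈ {r : ℝ | ∃ x : WithLp 2 (H × H), ‖x‖ = 1 ∧ r = ‖(inner ℂ (T x) x : ℂ)‖} :=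
    ⟨z, hznorm, by rw [hTz]⟩
  exact le_csSup (nr_bddAbove T) hmem

private lemma inner_add_le (X Y : H →L[ℂ] H) (T : WithLp 2 (H × H) →L[ℂ] WithLp 2 (H × H))
    (hT : ∀ x y : H, T ((WithLp.equiv 2 (H × H)).symm (x, y))
        = (WithLp.equiv 2 (H × H)).symm (X y, Y x))
    (u w : H) (hu : ‖u‖ = 1) (hw : ‖w‖ = 1) :
    ‖(inner ℂ ((X + adjoint Y) w) u : ℂ)‖ / 2 ≤ nr T := by
  set p : ℂ := inner ℂ (X w) u with hp
  set q : ℂ := inner ℂ (Y u) w with hq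
  set r : ℂ := inner ℂ ((adjoint Y) w) u with hr
  have hqr : q = starRingEnd ℂ r := by
    rw [hq, hr, adjoint_inner_left, ← inner_conj_symm]
  have hsum : (inner ℂ ((X + adjoint Y) w) u : ℂ) = p + r := by
    simp [hp, hr, inner_add_left]
  rw [hsum]
  by_cases hpr : p + r = 0
  · rw [hpr, norm_zero]
    have := nr_nonneg T
    linarith
  · have hprn : (‖p + r‖ : ℝ) ≠ 0 := norm_ne_zero_iff.2 hpr
    have hcne : ((‖p + r‖ : ℝ) : ℂ) ≠ 0 := Complex.ofReal_ne_zero.2 hprn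
    set c : ℂ := (p + r) / ‖p + r‖ with hcdef
    have hc : ‖c‖ = 1 := by
      rw [hcdef, norm_div, Complex.norm_real, Real.norm_eq_abs, abs_norm, div_self hprn]
    have key := key_le X Y T hT u w hu hw c hc
    have h2 : starRingEnd ℂ c * (p + r) = ((‖p + r‖ : ℝ) : ℂ) := by
      rw [hcdef, map_div₀, Complex.conj_ofReal, div_mul_eq_mul_div, conj_self_mul, sq,
        mul_div_assoc, div_self hcne, mul_one]
    have h1 : (c * q).re = (starRingEnd ℂ c * r).re := by
      rw [hqr, show c * starRingEnd ℂ r = starRingEnd ℂ (starRingEnd ℂ c * r) by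
        rw [map_mul, Complex.conj_conj], Complex.conj_re]
    have hre : (starRingEnd ℂ c * p + c * q).re = ‖p + r‖ := by
      rw [Complex.add_re, h1, ← Complex.add_re, ← mul_add, h2, Complex.ofReal_re]
    have habs : ‖(starRingEnd ℂ c * p + c * q) / 2‖
        = ‖starRingEnd ℂ c * p + c * q‖ / 2 := by
      rw [norm_div, Complex.norm_two]
    calc ‖p + r‖ / 2 = (starRingEnd ℂ c * p + c * q).re / 2 := by rw [hre]
      _ ≤ ‖starRingEnd ℂ c * p + c * q‖ / 2 := by
          have := Complex.re_le_norm (starRingEnd ℂ c * p + c * q); linarith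
      _ = ‖(starRingEnd ℂ c * p + c * q) / 2‖ := habs.symm
      _ ≤ nr T := key

private lemma inner_sub_le (X Y : H →L[ℂ] H) (T : WithLp 2 (H × H) →L[ℂ] WithLp 2 (H × H))
    (hT : ∀ x y : H, T ((WithLp.equiv 2 (H × H)).symm (x, y))
        = (WithLp.equiv 2 (H × H)).symm (X y, Y x))
    (u w : H) (hu : ‖u‖ = 1) (hw : ‖w‖ = 1) :
    ‖(inner ℂ ((X - adjoint Y) w) u : ℂ)‖ / 2 ≤ nr T := by
  set p : ℂ := inner ℂ (X w) u with hp
  set q : ℂ := inner ℂ (Y u) w with hq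
  set r : ℂ := inner ℂ ((adjoint Y) w) u with hr
  have hqr : q = starRingEnd ℂ r := by
    rw [hq, hr, adjoint_inner_left, ← inner_conj_symm]
  have hsum : (inner ℂ ((X - adjoint Y) w) u : ℂ) = p - r := by
    simp [hp, hr, inner_sub_left]
  rw [hsum]
  by_cases hpr : p - r = 0
  · rw [hpr, norm_zero]
    have := nr_nonneg T
    linarith
  · have hprn : (‖p - r‖ : ℝ) ≠ 0 := norm_ne_zero_iff.2 hpr
    have hcne : ((‖p - r‖ : ℝ) : ℂ) ≠ 0 := Complex.ofReal_ne_zero.2 hprn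
    set c : ℂ := Complex.I * (p - r) / ‖p - r‖ with hcdef
    have hc : ‖c‖ = 1 := by
      rw [hcdef, norm_div, norm_mul, Complex.norm_I, one_mul, Complex.norm_real, Real.norm_eq_abs, abs_norm,
        div_self hprn]
    have key := key_le X Y T hT u w hu hw c hc
    have h2 : starRingEnd ℂ c * (p - r) = -Complex.I * ((‖p - r‖ : ℝ) : ℂ) := by
      rw [hcdef, map_div₀, Complex.conj_ofReal, map_mul, Complex.conj_I,
        div_mul_eq_mul_div, mul_assoc, conj_self_mul, sq, mul_div_assoc, mul_div_assoc,
        div_self hcne, mul_one]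
    have h1 : (c * q).im = -((starRingEnd ℂ c * r).im) := by
      rw [hqr, show c * starRingEnd ℂ r = starRingEnd ℂ (starRingEnd ℂ c * r) by
        rw [map_mul, Complex.conj_conj], Complex.conj_im]
    have him : (starRingEnd ℂ c * p + c * q).im = -‖p - r‖ := by
      rw [Complex.add_im, h1, ← sub_eq_add_neg, ← Complex.sub_im, ← mul_sub, h2]
      simp
    have habs : ‖(starRingEnd ℂ c * p + c * q) / 2‖
        = ‖starRingEnd ℂ c * p + c * q‖ / 2 := by
      rw [norm_div, Complex.norm_two]
    have him2 : ‖p - r‖ ≤ ‖starRingEnd ℂ c * p + c * q‖ := by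
      have := Complex.abs_im_le_norm (starRingEnd ℂ c * p + c * q)
      rw [him] at this
      rw [abs_neg, abs_of_nonneg (norm_nonneg _)] at this
      exact this
    calc ‖p - r‖ / 2 ≤ ‖starRingEnd ℂ c * p + c * q‖ / 2 := by linarith
      _ = ‖(starRingEnd ℂ c * p + c * q) / 2‖ := habs.symm
      _ ≤ nr T := key

private lemma opnorm_le (B : H →L[ℂ] H) (T : WithLp 2 (H × H) →L[ℂ] WithLp 2 (H × H))
    (hbound : ∀ u w : H, ‖u‖ = 1 → ‖w‖ = 1 → ‖(inner ℂ (B w) u : ℂ)‖ / 2 ≤ nr T) :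
    ‖B‖ ≤ 2 * nr T := by
  refine opNorm_le_bound B (by have := nr_nonneg T; linarith) fun v => ?_
  rcases eq_or_ne v 0 with rfl | hv
  · simp
  · have hvn : (‖v‖ : ℝ) ≠ 0 := norm_ne_zero_iff.2 hv
    set v' : H := ((‖v‖⁻¹ : ℝ) : ℂ) • v with hv'def
    have hv' : ‖v'‖ = 1 := by
      rw [hv'def, norm_smul, Complex.norm_real, Real.norm_eq_abs, abs_of_nonneg (inv_nonneg.2 (norm_nonneg v)),
        inv_mul_cancel₀ hvn]
    have hBv : ‖B v‖ = ‖v‖ * ‖B v'‖ := by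
      rw [hv'def, map_smul, norm_smul, Complex.norm_real, Real.norm_eq_abs,
        abs_of_nonneg (inv_nonneg.2 (norm_nonneg v)), ← mul_assoc,
        mul_inv_cancel₀ hvn, one_mul]
    have hBv' : ‖B v'‖ ≤ 2 * nr T := by
      rcases eq_or_ne (B v') 0 with h0 | h0
      · rw [h0, norm_zero]
        have := nr_nonneg T
        linarith
      · have hBn : (‖B v'‖ : ℝ) ≠ 0 := norm_ne_zero_iff.2 h0
        set u : H := ((‖B v'‖⁻¹ : ℝ) : ℂ) • B v' with hudef
        have hu : ‖u‖ = 1 := by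
          rw [hudef, norm_smul, Complex.norm_real, Real.norm_eq_abs,
            abs_of_nonneg (inv_nonneg.2 (norm_nonneg _)), inv_mul_cancel₀ hBn]
        have hinner : ‖(inner ℂ (B v') u : ℂ)‖ = ‖B v'‖ := by
          rw [hudef, inner_smul_right, inner_self_eq_norm_sq_to_K]
          rw [norm_mul, Complex.norm_real, Real.norm_eq_abs, abs_of_nonneg (inv_nonneg.2 (norm_nonneg _))]
          rw [norm_pow, RCLike.norm_ofReal, abs_norm, sq]
          field_simp
        have := hbound u v' hu hv'
        rw [hinner] at this
        linarith
    rw [hBv]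
    calc ‖v‖ * ‖B v'‖ ≤ ‖v‖ * (2 * nr T) := by
          have : (0:ℝ) ≤ ‖v‖ := norm_nonneg v
          nlinarith
      _ = 2 * nr T * ‖v‖ := by ring

end main

theorem stmt_17 {H : Type*} [NormedAddCommGroup H] [InnerProductSpace ℂ H] [CompleteSpace H]
    (X Y : H →L[ℂ] H) (T : WithLp 2 (H × H) →L[ℂ] WithLp 2 (H × H))
    (hT : ∀ x y : H, T ((WithLp.equiv 2 (H × H)).symm (x, y))
        = (WithLp.equiv 2 (H × H)).symm (X y, Y x)) :
    nr T ≥ max (‖X‖ / 4) (‖Y‖ / 4)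
      + (1 / 4) * (‖X + adjoint Y‖ / 2 + ‖X - adjoint Y‖ / 2)
      + (1 / 2) * |‖X + adjoint Y‖ / 2 - ‖X - adjoint Y‖ / 2| := by
  have ha : ‖X + adjoint Y‖ ≤ 2 * nr T :=
    opnorm_le _ T (fun u w hu hw => inner_add_le X Y T hT u w hu hw)
  have hb : ‖X - adjoint Y‖ ≤ 2 * nr T :=
    opnorm_le _ T (fun u w hu hw => inner_sub_le X Y T hT u w hu hw)
  have h2X : X + X = (X + adjoint Y) + (X - adjoint Y) := by abel
  have hXn : ‖X‖ * 2 ≤ ‖X + adjoint Y‖ + ‖X - adjoint Y‖ := by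
    calc ‖X‖ * 2 = ‖X + X‖ := by
          rw [← two_smul ℂ X, norm_smul]
          simp [mul_comm]
      _ = ‖(X + adjoint Y) + (X - adjoint Y)‖ := by rw [← h2X]
      _ ≤ ‖X + adjoint Y‖ + ‖X - adjoint Y‖ := norm_add_le _ _
  have h2Y : adjoint Y + adjoint Y = (X + adjoint Y) - (X - adjoint Y) := by abel
  have hadj : ‖adjoint Y‖ = ‖Y‖ := by
    exact LinearIsometryEquiv.norm_map ContinuousLinearMap.adjoint Y
  have hYn : ‖Y‖ * 2 ≤ ‖X + adjoint Y‖ + ‖X - adjoint Y‖ := by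
    calc ‖Y‖ * 2 = ‖adjoint Y + adjoint Y‖ := by
          rw [← two_smul ℂ (adjoint Y), norm_smul, hadj]
          simp [mul_comm]
      _ = ‖(X + adjoint Y) - (X - adjoint Y)‖ := by rw [← h2Y]
      _ ≤ ‖X + adjoint Y‖ + ‖X - adjoint Y‖ := norm_sub_le _ _
  set a := ‖X + adjoint Y‖
  set b := ‖X - adjoint Y‖
  have hmax : max (‖X‖ / 4) (‖Y‖ / 4) ≤ (a + b) / 8 :=
    max_le (by linarith) (by linarith)
  rcases le_total b a with h | h
  · rw [abs_of_nonneg (by linarith : (0:ℝ) ≤ a / 2 - b / 2)]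
    linarith
  · rw [abs_of_nonpos (by linarith : a / 2 - b / 2 ≤ (0:ℝ))]
    linarith
end

section
/- For X, Y bounded linear operators on a complex Hilbert space H, w(XY) ≤ w((0, X; Y, 0))², where (0, X; Y, 0) denotes the off-diagonal 2×2 operator matrix on H ⊕ H. -/
open ContinuousLinearMap

theorem stmt_18 {H : Type*} [NormedAddCommGroup H] [InnerProductSpace ℂ H] [CompleteSpace H]
    (X Y : H →L[ℂ] H) (T : WithLp 2 (H × H) →L[ℂ] WithLp 2 (H × H))
    (hT : ∀ x y : H, T ((WithLp.equiv 2 (H × H)).symm (x, y))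
        = (WithLp.equiv 2 (H × H)).symm (X y, Y x)) :
    nr (X * Y) ≤ (nr T) ^ 2 := by
  have hbdd : BddAbove {r : ℝ | ∃ z : WithLp 2 (H × H), ‖z‖ = 1 ∧
      r = ‖(inner ℂ (T z) z : ℂ)‖} := by
    refine ⟨‖T‖, ?_⟩
    rintro r ⟨z, hz, rfl⟩
    calc ‖(inner ℂ (T z) z : ℂ)‖ ≤ ‖T z‖ * ‖z‖ := by
          exact norm_inner_le_norm _ _
      _ ≤ ‖T‖ * ‖z‖ * ‖z‖ := by
          gcongr; exact T.le_opNorm z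
      _ = ‖T‖ := by rw [hz]; ring
  apply Real.sSup_le
  · rintro r ⟨x, hx, rfl⟩
    by_cases hY : Y x = 0
    · have : (X * Y) x = 0 := by simp [ContinuousLinearMap.mul_apply, hY]
      rw [this]
      simp only [inner_zero_left, norm_zero]
      positivity
    · set c : ℂ := inner ℂ ((X * Y) x) x with hc
      set n : ℝ := ‖Y x‖ with hn
      have hn0 : 0 < n := norm_pos_iff.mpr hY
      set u : ℂ := Complex.exp ((c.arg : ℂ) * Complex.I / 2) with hu
      have hu_abs : ‖u‖ = 1 := by
        rw [hu]
        have : (c.arg : ℂ) * Complex.I / 2 = ((c.arg / 2 : ℝ) : ℂ) * Complex.I := by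
          push_cast; ring
        rw [this, Complex.norm_exp_ofReal_mul_I]
      have huc : (starRingEnd ℂ) u * c = (‖c‖ : ℂ) * u := by
        conv_lhs => rw [← Complex.norm_mul_exp_arg_mul_I c]
        rw [hu, ← Complex.exp_conj]
        simp only [map_div₀, map_mul, Complex.conj_ofReal, Complex.conj_I, map_ofNat]
        have he : Complex.exp ((c.arg : ℂ) * -Complex.I / 2) * Complex.exp ((c.arg : ℂ) * Complex.I)
            = Complex.exp ((c.arg : ℂ) * Complex.I / 2) := by
          rw [← Complex.exp_add]; congr 1; ring
        linear_combination (‖c‖ : ℂ) * he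
      set s : ℝ := (Real.sqrt 2)⁻¹ with hs
      have hs2 : s * s = 1 / 2 := by
        rw [hs, ← mul_inv, Real.mul_self_sqrt (by norm_num : (0:ℝ) ≤ 2)]
        norm_num
      have hs0 : 0 < s := by positivity
      set a : ℂ := (s : ℂ) with ha
      have ha2 : a * a = 1 / 2 := by
        rw [ha, ← Complex.ofReal_mul, hs2]; norm_num
      set z : WithLp 2 (H × H) :=
        (WithLp.equiv 2 (H × H)).symm (a • x, (a * u / (n : ℂ)) • Y x) with hz
      have hzn : ‖z‖ = 1 := by
        rw [hz, WithLp.prod_norm_eq_of_L2]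
        have h1 : ‖a‖ = s := by
          rw [ha, Complex.norm_of_nonneg hs0.le]
        have h2 : ‖a * u / (n : ℂ)‖ = s / n := by
          rw [norm_div, norm_mul, hu_abs, h1, Complex.norm_of_nonneg hn0.le, mul_one]
        simp only [WithLp.equiv_symm_apply, WithLp.toLp_fst, WithLp.toLp_snd, norm_smul]
        rw [hx, h1, h2, ← hn]
        rw [Real.sqrt_eq_one]
        field_simp
        nlinarith [hs2, hn0]
      have hTz : (inner ℂ (T z) z : ℂ) = (u / 2) * ((‖c‖ / n : ℂ) + (n : ℂ)) := by
        rw [hz, hT, WithLp.prod_inner_apply]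
        simp only [WithLp.equiv_symm_apply, WithLp.ofLp_toLp, map_smul,
          inner_smul_left, inner_smul_right]
        have hXY : (inner ℂ (X (Y x)) x : ℂ) = c := by
          rw [hc]; rfl
        have hself : (inner ℂ (Y x) (Y x) : ℂ) = (n : ℂ) ^ 2 := by
          rw [inner_self_eq_norm_sq_to_K, hn]; norm_cast
        have hca : (starRingEnd ℂ) a = a := by rw [ha, Complex.conj_ofReal]
        rw [hXY, hself]
        simp only [map_div₀, map_mul, hca, Complex.conj_ofReal]
        have hnne : (n : ℂ) ≠ 0 := by exact_mod_cast ne_of_gt hn0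
        field_simp
        linear_combination (2 * a * a) * huc
          + (2 * u * (‖c‖ : ℂ) + 2 * u * (n : ℂ) ^ 2) * ha2
      have hmem : ((1 / 2) * (‖c‖ / n + n) : ℝ) ∈
          {r : ℝ | ∃ z : WithLp 2 (H × H), ‖z‖ = 1 ∧
            r = ‖(inner ℂ (T z) z : ℂ)‖} := by
        refine ⟨z, hzn, ?_⟩
        rw [hTz]
        rw [norm_mul, norm_div, hu_abs]
        rw [Complex.norm_ofNat]
        have : ‖((‖c‖ / n : ℂ) + (n : ℂ))‖ = ‖c‖ / n + n := by
          have : ((‖c‖ / n : ℝ) : ℂ) + (n : ℂ) = ((‖c‖ / n + n : ℝ) : ℂ) := by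
            push_cast; ring
          rw [show ((‖c‖ : ℂ) / (n : ℂ)) = ((‖c‖ / n : ℝ) : ℂ) by push_cast; ring,
            this, Complex.norm_of_nonneg (by positivity)]
        rw [this]
      have hle : ((1 / 2) * (‖c‖ / n + n) : ℝ) ≤ nr T := by
        rw [nr]; exact le_csSup hbdd hmem
      have h0 : 0 ≤ (1 / 2 : ℝ) * (‖c‖ / n + n) := by positivity
      have hT0 : 0 ≤ nr T := le_trans h0 hle
      have hsq : ((1 / 2) * (‖c‖ / n + n) : ℝ) ^ 2 ≤ nr T ^ 2 :=
        pow_le_pow_left₀ h0 hle 2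
      have hamgm : ‖c‖ ≤ ((1 / 2) * (‖c‖ / n + n) : ℝ) ^ 2 := by
        nlinarith [sq_nonneg (‖c‖ / n - n), norm_nonneg c,
          mul_pos hn0 hn0, div_mul_cancel₀ (‖c‖) (ne_of_gt hn0)]
      exact le_trans hamgm hsq
  · positivity
end
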